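/- arXiv:1802.08361 — 6 statements merged into one kernel-verified Lean document; each statement's English description precedes it below -/
import Mathlib

section
/- Fix r ∈ ℛ, p ∈ 𝒫 and i ∈ {1,…,n}, and consider the function s ↦ c_i(r,s,p) = 1 − r_i^{-s} p_i − r_i^s p_i − 2 Σ_{k≠i} r_k^s p_k on [0,∞). Then: (1) c_i(r,0,p) = 0 and its derivative at s = 0 equals −2 Σ_{k≠i} (log r_k) p_k > 0; (2) its second derivative is strictly negative on (0,∞); (3) c_i(r,s,p) → −∞ as s → ∞. Consequently c_i(r,·,p) has a unique zero s_i = s_i(r,p) in (0,∞), and the derivative of c_i(r,·,p) at s_i is strictly negative. -/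
open Filter

namespace Cogrowth

noncomputable section

/-- Weighted length of a free group element given edge-length parameter `r`. -/
def wlen {n : ℕ} (r : Fin n → ℝ) (g : FreeGroup (Fin n)) : ℝ :=
  ((FreeGroup.toWord g).map fun l => - Real.log (r l.1)).sum

/-- Poincaré exponent of a subgroup `G` with respect to the weighted length `wlen r`. -/
def pexp {n : ℕ} (r : Fin n → ℝ) (G : Subgroup (FreeGroup (Fin n))) : ℝ :=
  limsup (fun R : ℝ =>
    Real.log (Nat.card {g : FreeGroup (Fin n) // g ∈ G ∧ wlen r g ≤ R}) / R) atTop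

/-- Poincaré exponent of the full free group. -/
def delta {n : ℕ} (r : Fin n → ℝ) : ℝ := pexp r ⊤

/-- Poincaré exponent with respect to the word metric. -/
def wordexp {n : ℕ} (G : Subgroup (FreeGroup (Fin n))) : ℝ :=
  limsup (fun R : ℝ =>
    Real.log (Nat.card {g : FreeGroup (Fin n) // g ∈ G ∧ ((FreeGroup.toWord g).length : ℝ) ≤ R}) / R) atTop

/-- The space of left cosets `Gx`. -/
abbrev Cosets {n : ℕ} (G : Subgroup (FreeGroup (Fin n))) := Quotient (QuotientGroup.rightRel G)

/-- Right multiplication on cosets: `Gx ↦ Gxa`. -/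
def rmul {n : ℕ} (G : Subgroup (FreeGroup (Fin n))) (a : FreeGroup (Fin n)) (x : Cosets G) :
    Cosets G :=
  Quotient.map (· * a) (fun x y h => by
    have h' : y * x⁻¹ ∈ G := QuotientGroup.rightRel_apply.mp h
    exact QuotientGroup.rightRel_apply.mpr (by simpa [mul_inv_rev, mul_assoc] using h')) x

/-- The weighted transition operator `A_p` on functions on `G\F_n` (pointwise formula). -/
def Aq {n : ℕ} (G : Subgroup (FreeGroup (Fin n))) (p : Fin n → ℝ) (f : Cosets G → ℝ)
    (x : Cosets G) : ℝ :=
  ∑ i, p i * (f (rmul G (FreeGroup.of i) x) + f (rmul G (FreeGroup.of i)⁻¹ x))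

/-- Bottom of the spectrum of `Δ_p = I - A_p` on `ℓ²(G\F_n)`. -/
def lambda0 {n : ℕ} (G : Subgroup (FreeGroup (Fin n))) (p : Fin n → ℝ) : ℝ :=
  sInf { L : ℝ | ∃ f : Cosets G → ℝ, Memℓp f 2 ∧ (∑' x, f x ^ 2) = 1 ∧
    L = ∑' x, (f x - Aq G p f x) * f x }

/-- The weighted transition operator `A_p` on functions on `F_n`. -/
def Afree {n : ℕ} (p : Fin n → ℝ) (f : FreeGroup (Fin n) → ℝ) (x : FreeGroup (Fin n)) : ℝ :=
  ∑ i, p i * (f (x * FreeGroup.of i) + f (x * (FreeGroup.of i)⁻¹))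

/-- Bottom of the spectrum of `Δ_p = I - A_p` on `ℓ²(F_n)`. -/
def lambda0F {n : ℕ} (p : Fin n → ℝ) : ℝ :=
  sInf { L : ℝ | ∃ f : FreeGroup (Fin n) → ℝ, Memℓp f 2 ∧ (∑' x, f x ^ 2) = 1 ∧
    L = ∑' x, (f x - Afree p f x) * f x }

/-- Spectral radius of `A_p` on `ℓ²(F_n)`. -/
def rhoF {n : ℕ} (p : Fin n → ℝ) : ℝ :=
  sSup { L : ℝ | ∃ f : FreeGroup (Fin n) → ℝ, Memℓp f 2 ∧ (∑' x, f x ^ 2) = 1 ∧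
    L = ∑' x, Afree p f x * f x }

/-- `D(u) = Σ_j ∏_{k≠j} (u_k⁻¹ - u_k)`. -/
def Dfun {n : ℕ} (u : Fin n → ℝ) : ℝ :=
  ∑ j, ∏ k ∈ Finset.univ.erase j, ((u k)⁻¹ - u k)

/-- The weight `p(u)` determined by `u`. -/
def pfun {n : ℕ} (u : Fin n → ℝ) (i : Fin n) : ℝ :=
  (∏ k ∈ Finset.univ.erase i, ((u k)⁻¹ - u k)) / (2 * Dfun u)

/-- The common eigenvalue `λ(u)`. -/
def lamfun {n : ℕ} (u : Fin n → ℝ) : ℝ :=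
  (Dfun u)⁻¹ * ((∑ j, (1 - u j) * ∏ k ∈ Finset.univ.erase j, ((u k)⁻¹ - u k)) -
    (1 / 2) * ∏ l, ((u l)⁻¹ - u l))

/-- `l(u) = 2 Σ_j u_j ∏_{k≠j}(1+u_k) - ∏_ℓ (1+u_ℓ)`. -/
def lfun {n : ℕ} (u : Fin n → ℝ) : ℝ :=
  2 * ∑ j, u j * ∏ k ∈ Finset.univ.erase j, (1 + u k) - ∏ l, (1 + u l)

/-- `c_i(u,p) = 1 - 2 Σ_k u_k p_k - (u_i⁻¹ - u_i) p_i`. -/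
def cfun {n : ℕ} (u p : Fin n → ℝ) (i : Fin n) : ℝ :=
  1 - 2 * ∑ k, u k * p k - ((u i)⁻¹ - u i) * p i

/-- `H(r,s) = (r_1^s, …, r_n^s)`. -/
def Hmap {n : ℕ} (r : Fin n → ℝ) (s : ℝ) : Fin n → ℝ := fun i => r i ^ s

/-- The curve `γ_p(τ)`, the solution `u_i ∈ (0,1)` of `(u⁻¹ - u) p_i = τ`. -/
def gam {n : ℕ} (p : Fin n → ℝ) (τ : ℝ) : Fin n → ℝ := fun i =>
  (Real.sqrt (τ ^ 2 * ((p i)⁻¹) ^ 2 + 4) - τ * (p i)⁻¹) / 2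

end

end Cogrowth

open Real Set in
/-- properties of `s ↦ c_i(r,s,p)`. -/
theorem statement6 (n : ℕ) (hn : 2 ≤ n) (r p : Fin n → ℝ) (hr : ∀ i, 0 < r i)
    (hrsum : ∑ i, r i = 1 / 2) (hp : ∀ i, 0 < p i) (hpsum : ∑ i, p i = 1 / 2)
    (i : Fin n) (c : ℝ → ℝ)
    (hc : ∀ s : ℝ, c s =
      1 - r i ^ (-s) * p i - r i ^ s * p i -
        2 * ∑ k ∈ Finset.univ.erase i, r k ^ s * p k) :
    c 0 = 0 ∧
    deriv c 0 = -2 * ∑ k ∈ Finset.univ.erase i, Real.log (r k) * p k ∧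
    0 < deriv c 0 ∧
    (∀ s : ℝ, 0 < s → deriv (deriv c) s < 0) ∧
    Filter.Tendsto c Filter.atTop Filter.atBot ∧
    (∃! s : ℝ, 0 < s ∧ c s = 0) ∧
    (∀ s : ℝ, 0 < s → c s = 0 → deriv c s < 0) := by
  -- basic facts
  have hrlt1 : ∀ k, r k < 1 := by
    intro k
    have : r k ≤ ∑ j, r j := Finset.single_le_sum (fun j _ => (hr j).le) (Finset.mem_univ k)
    linarith [this, hrsum ▸ this]
  have hlogneg : ∀ k, Real.log (r k) < 0 := fun k =>
    Real.log_neg (hr k) (hrlt1 k)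
  -- derivative formulas
  set c1 : ℝ → ℝ := fun s => Real.log (r i) * p i * (r i ^ (-s) - r i ^ s) -
      2 * ∑ k ∈ Finset.univ.erase i, Real.log (r k) * p k * r k ^ s with hc1def
  set c2 : ℝ → ℝ := fun s => Real.log (r i) ^ 2 * p i * (-(r i ^ (-s)) - r i ^ s) -
      2 * ∑ k ∈ Finset.univ.erase i, Real.log (r k) ^ 2 * p k * r k ^ s with hc2def
  have hder : ∀ a : ℝ, 0 < a → ∀ s : ℝ, HasDerivAt (fun s : ℝ => a ^ s) (a ^ s * Real.log a) s :=
    fun a ha s => (Real.hasStrictDerivAt_const_rpow ha s).hasDerivAt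
  have hderneg : ∀ a : ℝ, 0 < a → ∀ s : ℝ,
      HasDerivAt (fun s : ℝ => a ^ (-s)) (-(a ^ (-s) * Real.log a)) s := by
    intro a ha s
    have := (hder a ha (-s)).comp s (hasDerivAt_neg s)
    simpa [mul_comm, Function.comp_def] using this
  have hd1 : ∀ s, HasDerivAt c (c1 s) s := by
    intro s
    have hcf : c = fun s => 1 - r i ^ (-s) * p i - r i ^ s * p i -
        2 * ∑ k ∈ Finset.univ.erase i, r k ^ s * p k := funext hc
    rw [hcf]
    have hsum : HasDerivAt (fun s : ℝ => ∑ k ∈ Finset.univ.erase i, r k ^ s * p k)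
        (∑ k ∈ Finset.univ.erase i, Real.log (r k) * p k * r k ^ s) s :=
      HasDerivAt.fun_sum fun k _ => by
        exact ((hder (r k) (hr k) s).mul_const (p k)).congr_deriv (by ring)
    have h1 := (hderneg (r i) (hr i) s).mul_const (p i)
    have h2 := (hder (r i) (hr i) s).mul_const (p i)
    have := (((hasDerivAt_const s (1:ℝ)).sub h1).sub h2).sub (hsum.const_mul 2)
    refine this.congr_deriv ?_
    simp only [hc1def]
    ring
  have hd2 : ∀ s, HasDerivAt c1 (c2 s) s := by
    intro s
    have hsum : HasDerivAt (fun s : ℝ => ∑ k ∈ Finset.univ.erase i, Real.log (r k) * p k * r k ^ s)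
        (∑ k ∈ Finset.univ.erase i, Real.log (r k) ^ 2 * p k * r k ^ s) s := by
      exact HasDerivAt.fun_sum (fun k _ => by
        have := ((hder (r k) (hr k) s).const_mul (Real.log (r k) * p k))
        exact this.congr_deriv (by ring))
    have h1 := ((hderneg (r i) (hr i) s).sub (hder (r i) (hr i) s)).const_mul
      (Real.log (r i) * p i)
    have := h1.sub (hsum.const_mul 2)
    refine this.congr_deriv ?_
    simp only [hc2def]
    ring
  have hderivc : deriv c = c1 := funext fun s => (hd1 s).deriv
  have hderivc1 : ∀ s, deriv (deriv c) s = c2 s := fun s => by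
    rw [hderivc]; exact (hd2 s).deriv
  -- c 0 = 0
  have hc0 : c 0 = 0 := by
    have := hc 0
    simp only [neg_zero, Real.rpow_zero, one_mul] at this
    rw [this]
    have : ∑ k ∈ Finset.univ.erase i, p k = 1/2 - p i := by
      rw [eq_sub_iff_add_eq, Finset.sum_erase_add _ _ (Finset.mem_univ i)]
      exact hpsum
    rw [this]; ring
  -- deriv c 0
  have hdc0 : deriv c 0 = -2 * ∑ k ∈ Finset.univ.erase i, Real.log (r k) * p k := by
    rw [hderivc]
    simp only [hc1def, neg_zero, Real.rpow_zero]
    ring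
  -- 0 < deriv c 0
  have hione : (Finset.univ.erase i).Nonempty := by
    rw [← Finset.card_pos, Finset.card_erase_of_mem (Finset.mem_univ i), Finset.card_univ,
      Fintype.card_fin]
    omega
  have hsumneg : ∑ k ∈ Finset.univ.erase i, Real.log (r k) * p k < 0 :=
    Finset.sum_neg (fun k _ => mul_neg_of_neg_of_pos (hlogneg k) (hp k)) hione
  have hdc0pos : 0 < deriv c 0 := by rw [hdc0]; nlinarith
  -- c2 < 0 everywhere
  have hc2neg : ∀ s, c2 s < 0 := by
    intro s
    have hli : Real.log (r i) ≠ 0 := (hlogneg i).ne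
    have h1 : Real.log (r i) ^ 2 * p i * (-(r i ^ (-s)) - r i ^ s) < 0 := by
      apply mul_neg_of_pos_of_neg
      · exact mul_pos (pow_two_pos_of_ne_zero hli) (hp i)
      · have := Real.rpow_pos_of_pos (hr i) (-s)
        have := Real.rpow_pos_of_pos (hr i) s
        linarith
    have h2 : 0 ≤ ∑ k ∈ Finset.univ.erase i, Real.log (r k) ^ 2 * p k * r k ^ s :=
      Finset.sum_nonneg fun k _ => by
        have h1 := Real.rpow_pos_of_pos (hr k) s
        have h2 : (0:ℝ) ≤ Real.log (r k) ^ 2 := sq_nonneg _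
        have := (hp k).le
        positivity
    simp only [hc2def]
    nlinarith
  -- c1 strict anti
  have hc1anti : StrictAnti c1 :=
    strictAnti_of_deriv_neg fun s => by rw [(hd2 s).deriv]; exact hc2neg s
  -- tendsto atBot
  have htends : Filter.Tendsto c Filter.atTop Filter.atBot := by
    have hbound : ∀ s : ℝ, c s ≤ 1 - r i ^ (-s) * p i := by
      intro s
      rw [hc s]
      have h1 : 0 < r i ^ s * p i := mul_pos (Real.rpow_pos_of_pos (hr i) s) (hp i)
      have h2 : 0 ≤ ∑ k ∈ Finset.univ.erase i, r k ^ s * p k :=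
        Finset.sum_nonneg fun k _ => (mul_pos (Real.rpow_pos_of_pos (hr k) s) (hp k)).le
      linarith
    have hmain : Tendsto (fun s : ℝ => 1 - r i ^ (-s) * p i) atTop atBot := by
      have hexp : Tendsto (fun s : ℝ => r i ^ (-s)) atTop atTop := by
        have : ∀ s : ℝ, r i ^ (-s) = Real.exp (s * (-Real.log (r i))) := by
          intro s
          rw [Real.rpow_def_of_pos (hr i)]
          ring_nf
        simp only [this]
        exact Real.tendsto_exp_atTop.comp
          (Tendsto.atTop_mul_const (by linarith [hlogneg i]) tendsto_id)
      have h := hexp.atTop_mul_const (hp i)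
      have hneg : Tendsto (fun s : ℝ => -(r i ^ (-s) * p i)) atTop atBot :=
        tendsto_neg_atTop_atBot.comp h
      simpa [sub_eq_add_neg] using tendsto_atBot_add_const_left atTop 1 hneg
    exact tendsto_atBot_mono hbound hmain
  -- existence of s with c s > 0 near 0
  have hcont : Continuous c := by
    have : Differentiable ℝ c := fun s => (hd1 s).differentiableAt
    exact this.continuous
  have hpos : ∃ s : ℝ, 0 < s ∧ 0 < c s := by
    have hslope := (hasDerivAt_iff_tendsto_slope.mp (hd1 0))
    have hc10pos : 0 < c1 0 := by have := hdc0pos; rwa [hderivc] at this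
    have hev : ∀ᶠ t in nhdsWithin 0 {x | x ≠ 0}, 0 < slope c 0 t :=
      hslope.eventually (eventually_gt_nhds hc10pos)
    have hev' : ∀ᶠ t in nhdsWithin 0 (Set.Ioi 0), 0 < slope c 0 t :=
      hev.filter_mono (nhdsWithin_mono 0 (fun x hx => ne_of_gt hx))
    obtain ⟨t, ht, ht0⟩ := (hev'.and self_mem_nhdsWithin).exists
    refine ⟨t, ht0, ?_⟩
    have : slope c 0 t = c t / t := by simp [slope_def_field, hc0]
    rw [this] at ht
    exact (div_pos_iff.mp ht).resolve_right (fun h => absurd ht0 (not_lt.mpr h.2.le)) |>.1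
  -- existence of zero
  obtain ⟨a, ha0, hca⟩ := hpos
  have hneg : ∃ b : ℝ, a < b ∧ c b < 0 := by
    have h1 : ∀ᶠ s in atTop, c s < 0 := htends.eventually (eventually_lt_atBot 0)
    obtain ⟨b, hb1, hb2⟩ := (h1.and (eventually_gt_atTop a)).exists
    exact ⟨b, hb2, hb1⟩
  obtain ⟨b, hab, hcb⟩ := hneg
  have hzero : ∃ s₀ ∈ Set.Ioo a b, c s₀ = 0 := by
    have := intermediate_value_Ioo' hab.le hcont.continuousOn
      (show (0:ℝ) ∈ Set.Ioo (c b) (c a) from ⟨hcb, hca⟩)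
    obtain ⟨s₀, hs₀, hcs₀⟩ := this
    exact ⟨s₀, hs₀, hcs₀⟩
  obtain ⟨s₀, hs₀mem, hcs₀⟩ := hzero
  have hs₀pos : 0 < s₀ := lt_trans ha0 hs₀mem.1
  -- deriv < 0 at zeros (via Rolle)
  have hdneg : ∀ s : ℝ, 0 < s → c s = 0 → deriv c s < 0 := by
    intro s hs hcs
    obtain ⟨ξ, hξ, hξ0⟩ := exists_deriv_eq_zero hs hcont.continuousOn (hc0.trans hcs.symm)
    rw [hderivc] at hξ0 ⊢
    calc c1 s < c1 ξ := hc1anti hξ.2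
    _ = 0 := hξ0
  -- uniqueness
  have huniq : ∀ s₁ s₂ : ℝ, 0 < s₁ → c s₁ = 0 → 0 < s₂ → c s₂ = 0 → s₁ = s₂ := by
    intro s₁ s₂ h1 hc1' h2 hc2'
    by_contra hne
    wlog hlt : s₁ < s₂ generalizing s₁ s₂
    · exact this s₂ s₁ h2 hc2' h1 hc1' (Ne.symm hne) (lt_of_le_of_ne (not_lt.mp hlt) (Ne.symm hne))
    obtain ⟨ξ₁, hξ₁, hξ₁0⟩ := exists_deriv_eq_zero h1 hcont.continuousOn (hc0.trans hc1'.symm)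
    obtain ⟨ξ₂, hξ₂, hξ₂0⟩ := exists_deriv_eq_zero hlt hcont.continuousOn (hc1'.trans hc2'.symm)
    rw [hderivc] at hξ₁0 hξ₂0
    have hlt2 : c1 ξ₂ < c1 ξ₁ := hc1anti (lt_trans hξ₁.2 hξ₂.1)
    rw [hξ₁0, hξ₂0] at hlt2
    exact lt_irrefl 0 hlt2
  refine ⟨hc0, hdc0, hdc0pos, fun s _ => hderivc1 s ▸ hc2neg s, htends,
    ⟨s₀, ⟨hs₀pos, hcs₀⟩, fun s hs => huniq s s₀ hs.1 hs.2 hs₀pos hcs₀⟩, hdneg⟩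
end

section
/- Let u = (u_1,…,u_n) ∈ (0,∞)^n and suppose the system c_1(u,p) = ⋯ = c_n(u,p) with p_1+⋯+p_n = 1/2 has a solution p with p_i > 0 for all i. Then exactly one of the following holds: (i) u_i = 1 for all i, in which case D(u) = 0 and every p with Σ p_i = 1/2 is a solution with common value λ = 0; (ii) u_i > 1 for all i, in which case D(u) ≠ 0 and the common value λ(u) is strictly negative; (iii) u_i < 1 for all i, in which case D(u) ≠ 0. -/
open Filter

lemma prod_neg_aux {α : Type*} (s : Finset α) (f : α → ℝ) :
    ∏ k ∈ s, (-(f k)) = (-1 : ℝ) ^ s.card * ∏ k ∈ s, f k := by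
  calc ∏ k ∈ s, (-(f k)) = ∏ k ∈ s, ((-1 : ℝ) * f k) := by
        exact Finset.prod_congr rfl fun k _ => (neg_one_mul (f k)).symm
    _ = (∏ _k ∈ s, (-1 : ℝ)) * ∏ k ∈ s, f k := Finset.prod_mul_distrib
    _ = (-1 : ℝ) ^ s.card * ∏ k ∈ s, f k := by rw [Finset.prod_const]

/-- trichotomy for positive solutions of the system. -/
theorem statement9 (n : ℕ) (hn : 2 ≤ n) (u : Fin n → ℝ) (hu : ∀ i, 0 < u i)
    (p : Fin n → ℝ) (hp : ∀ i, 0 < p i) (hpsum : ∑ i, p i = 1 / 2)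
    (hsol : ∀ i j, Cogrowth.cfun u p i = Cogrowth.cfun u p j) :
    ((∀ i, u i = 1) ∨ (∀ i, 1 < u i) ∨ (∀ i, u i < 1)) ∧
    ((∀ i, u i = 1) → Cogrowth.Dfun u = 0 ∧
      ∀ q : Fin n → ℝ, (∑ i, q i = 1 / 2) → ∀ i, Cogrowth.cfun u q i = 0) ∧
    ((∀ i, 1 < u i) → Cogrowth.Dfun u ≠ 0 ∧ Cogrowth.lamfun u < 0) ∧
    ((∀ i, u i < 1) → Cogrowth.Dfun u ≠ 0) := by
  have hinv : ∀ i, (u i)⁻¹ * u i = 1 := fun i => inv_mul_cancel₀ (hu i).ne'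
  -- the common product (u i⁻¹ - u i) * p i
  have key : ∀ i j, ((u i)⁻¹ - u i) * p i = ((u j)⁻¹ - u j) * p j := by
    intro i j
    have h := hsol i j
    simp only [Cogrowth.cfun] at h
    linarith
  -- sign equivalences
  have sgn_lt : ∀ i, 1 < u i ↔ (u i)⁻¹ - u i < 0 := by
    intro i
    have h1 := hinv i; have h2 := hu i
    constructor
    · intro h; nlinarith
    · intro h; nlinarith
  have sgn_gt : ∀ i, u i < 1 ↔ 0 < (u i)⁻¹ - u i := by
    intro i
    have h1 := hinv i; have h2 := hu i
    constructor
    · intro h; nlinarith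
    · intro h; nlinarith
  have sgn_eq : ∀ i, u i = 1 ↔ (u i)⁻¹ - u i = 0 := by
    intro i
    have h1 := hinv i; have h2 := hu i
    constructor
    · intro h; rw [h]; norm_num
    · intro h
      have hs : u i * u i = 1 := by nlinarith
      rcases mul_self_eq_one_iff.mp hs with h' | h'
      · exact h'
      · linarith
  have i0 : Fin n := ⟨0, by omega⟩
  have hne : (Finset.univ : Finset (Fin n)).Nonempty := ⟨i0, Finset.mem_univ _⟩
  -- trichotomy
  have tri : (∀ i, u i = 1) ∨ (∀ i, 1 < u i) ∨ (∀ i, u i < 1) := by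
    rcases lt_trichotomy (u i0) 1 with h | h | h
    · right; right; intro i
      have hv0 : 0 < ((u i0)⁻¹ - u i0) := (sgn_gt i0).1 h
      have hpos : 0 < ((u i)⁻¹ - u i) * p i := by
        rw [key i i0]; exact mul_pos hv0 (hp i0)
      apply (sgn_gt i).2
      by_contra h'
      push_neg at h'
      nlinarith [hp i]
    · left; intro i
      have hv0 : ((u i0)⁻¹ - u i0) = 0 := (sgn_eq i0).1 h
      have hz : ((u i)⁻¹ - u i) * p i = 0 := by rw [key i i0, hv0]; ring
      apply (sgn_eq i).2
      rcases mul_eq_zero.mp hz with h' | h'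
      · exact h'
      · exact absurd h' (hp i).ne'
    · right; left; intro i
      have hv0 : ((u i0)⁻¹ - u i0) < 0 := (sgn_lt i0).1 h
      have hneg : ((u i)⁻¹ - u i) * p i < 0 := by
        rw [key i i0]; exact mul_neg_of_neg_of_pos hv0 (hp i0)
      apply (sgn_lt i).2
      by_contra h'
      push_neg at h'
      nlinarith [hp i]
  refine ⟨tri, ?_, ?_, ?_⟩
  · -- case all u i = 1
    intro h
    constructor
    · unfold Cogrowth.Dfun
      apply Finset.sum_eq_zero
      intro j _
      have hcard : (Finset.univ.erase j).card = n - 1 := by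
        rw [Finset.card_erase_of_mem (Finset.mem_univ j), Finset.card_univ, Fintype.card_fin]
      have hne' : (Finset.univ.erase j).Nonempty := by
        rw [← Finset.card_pos, hcard]; omega
      obtain ⟨k, hk⟩ := hne'
      exact Finset.prod_eq_zero hk (by rw [h k]; norm_num)
    · intro q hq i
      simp only [Cogrowth.cfun, h, one_mul, inv_one, sub_self, zero_mul, hq]
      ring
  · -- case all u i > 1
    intro h
    set w : Fin n → ℝ := fun k => u k - (u k)⁻¹ with hwdef
    have hw : ∀ k, 0 < w k := by
      intro k
      have := (sgn_lt k).1 (h k)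
      simp only [hwdef]; linarith
    have hcard : ∀ j : Fin n, (Finset.univ.erase j).card = n - 1 := by
      intro j
      rw [Finset.card_erase_of_mem (Finset.mem_univ j), Finset.card_univ, Fintype.card_fin]
    have prod_eq : ∀ j : Fin n, ∏ k ∈ Finset.univ.erase j, ((u k)⁻¹ - u k)
        = (-1 : ℝ) ^ (n - 1) * ∏ k ∈ Finset.univ.erase j, w k := by
      intro j
      rw [show (∏ k ∈ Finset.univ.erase j, ((u k)⁻¹ - u k))
          = ∏ k ∈ Finset.univ.erase j, (-(w k)) by
        apply Finset.prod_congr rfl; intro k _; simp only [hwdef]; ring]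
      rw [prod_neg_aux, hcard]
    have prod_full : ∏ l, ((u l)⁻¹ - u l) = (-1 : ℝ) ^ n * ∏ l, w l := by
      rw [show (∏ l, ((u l)⁻¹ - u l)) = ∏ l, (-(w l)) by
        apply Finset.prod_congr rfl; intro k _; simp only [hwdef]; ring]
      rw [prod_neg_aux, Finset.card_univ, Fintype.card_fin]
    set D' : ℝ := ∑ j, ∏ k ∈ Finset.univ.erase j, w k with hD'def
    have hD' : 0 < D' := by
      apply Finset.sum_pos
      · intro j _
        exact Finset.prod_pos fun k _ => hw k
      · exact hne
    have hD : Cogrowth.Dfun u = (-1 : ℝ) ^ (n - 1) * D' := by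
      unfold Cogrowth.Dfun
      rw [hD'def, Finset.mul_sum]
      exact Finset.sum_congr rfl fun j _ => prod_eq j
    have he2 : ((-1 : ℝ) ^ (n - 1)) * ((-1 : ℝ) ^ (n - 1)) = 1 := by
      rw [← pow_add]
      exact (neg_one_pow_eq_one_iff_even (by norm_num)).mpr ⟨n - 1, by ring⟩
    constructor
    · rw [hD]
      exact mul_ne_zero (pow_ne_zero _ (by norm_num)) hD'.ne'
    · -- lamfun < 0
      have hpown : (-1 : ℝ) ^ n = -((-1 : ℝ) ^ (n - 1)) := by
        obtain ⟨m, hm⟩ : ∃ m, n = m + 1 := ⟨n - 1, by omega⟩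
        rw [hm, Nat.add_sub_cancel, pow_succ]; ring
      set N : ℝ := (∑ j, (1 - u j) * ∏ k ∈ Finset.univ.erase j, w k)
          + (1 / 2) * ∏ l, w l with hNdef
      have hlam : Cogrowth.lamfun u = D'⁻¹ * N := by
        unfold Cogrowth.lamfun
        rw [hD]
        have hnum : (∑ j, (1 - u j) * ∏ k ∈ Finset.univ.erase j, ((u k)⁻¹ - u k))
            - (1 / 2) * ∏ l, ((u l)⁻¹ - u l) = (-1 : ℝ) ^ (n - 1) * N := by
          rw [prod_full, hpown, hNdef, mul_add, Finset.mul_sum]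
          rw [show ∀ a b : ℝ, a - b = a + -b from fun a b => by ring]
          congr 1
          · exact Finset.sum_congr rfl fun j _ => by rw [prod_eq j]; ring
          · ring
        rw [hnum, mul_inv]
        have hinve : ((-1 : ℝ) ^ (n - 1))⁻¹ = (-1 : ℝ) ^ (n - 1) :=
          inv_eq_of_mul_eq_one_right he2
        rw [hinve]
        calc (-1 : ℝ) ^ (n - 1) * D'⁻¹ * ((-1 : ℝ) ^ (n - 1) * N)
            = ((-1 : ℝ) ^ (n - 1) * (-1 : ℝ) ^ (n - 1)) * (D'⁻¹ * N) := by ring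
          _ = D'⁻¹ * N := by rw [he2, one_mul]
      rw [hlam]
      apply mul_neg_of_pos_of_neg (inv_pos.mpr hD')
      -- N < 0
      have term_eq : ∀ j : Fin n, (1 - u j) * ∏ k ∈ Finset.univ.erase j, w k
          = -(u j / (u j + 1)) * ∏ l, w l := by
        intro j
        rw [← Finset.mul_prod_erase Finset.univ w (Finset.mem_univ j)]
        have h1 : (1 - u j) = -(u j / (u j + 1)) * w j := by
          have hu1 : u j + 1 ≠ 0 := ne_of_gt (by linarith [hu j])
          have hu0 : u j ≠ 0 := (hu j).ne'
          simp only [hwdef]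
          field_simp
          ring
        rw [h1]; ring
      have hNeq : N = (1 / 2 - ∑ j, u j / (u j + 1)) * ∏ l, w l := by
        rw [hNdef, Finset.sum_congr rfl fun j _ => term_eq j, ← Finset.sum_mul,
          Finset.sum_neg_distrib]
        ring
      rw [hNeq]
      apply mul_neg_of_neg_of_pos
      · have hsum : ∑ _j : Fin n, (1 / 2 : ℝ) < ∑ j, u j / (u j + 1) := by
          apply Finset.sum_lt_sum_of_nonempty hne
          intro j _
          rw [div_lt_div_iff₀ (by norm_num) (by linarith [hu j])]
          nlinarith [h j]
        have : (∑ _j : Fin n, (1 / 2 : ℝ)) = n / 2 := by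
          rw [Finset.sum_const, Finset.card_univ, Fintype.card_fin]; ring
        rw [this] at hsum
        have hn2 : (1 : ℝ) ≤ (n : ℝ) / 2 := by
          have : (2 : ℝ) ≤ (n : ℝ) := by exact_mod_cast hn
          linarith
        linarith
      · exact Finset.prod_pos fun k _ => hw k
  · -- case all u i < 1
    intro h
    have : 0 < Cogrowth.Dfun u := by
      unfold Cogrowth.Dfun
      apply Finset.sum_pos
      · intro j _
        exact Finset.prod_pos fun k _ => (sgn_gt k).1 (h k)
      · exact hne
    exact this.ne'
end

section
/- For every r ∈ ℛ, there exists a unique s > 0 such that l(H(r,s)) = 0, and this unique s equals the Poincaré exponent δ(r) of F_n. -/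
open Filter

open Finset List

namespace Cog
set_option linter.unusedSectionVars false
set_option linter.unusedVariables false

abbrev A (n : ℕ) := Fin n × Bool

def Rel {n : ℕ} (x y : A n) : Prop := y ≠ (x.1, !x.2)

instance {n : ℕ} : DecidableRel (@Rel n) := fun x y => by unfold Rel; infer_instance

lemma cancel_iff {n : ℕ} (x y : A n) : (x.1 = y.1 ∧ x.2 = !y.2) ↔ y = (x.1, !x.2) := by
  obtain ⟨a, b⟩ := x; obtain ⟨c, d⟩ := y
  cases b <;> cases d <;> simp [Prod.ext_iff, eq_comm]

lemma chain'_reduce {n : ℕ} (l : List (A n)) : (FreeGroup.reduce l).IsChain Rel := by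
  induction l with
  | nil => simp
  | cons x l ih =>
    rw [FreeGroup.reduce.cons]
    rcases h : FreeGroup.reduce l with _ | ⟨y, t⟩
    · simp
    · rw [h] at ih
      show IsChain Rel (if x.1 = y.1 ∧ x.2 = !y.2 then t else x :: y :: t)
      by_cases hc : x.1 = y.1 ∧ x.2 = !y.2
      · rw [if_pos hc]; exact ih.tail
      · rw [if_neg hc]
        exact List.isChain_cons.mpr ⟨fun z hz => by
          simp only [List.head?_cons, Option.mem_some_iff] at hz
          subst hz
          exact fun he => hc ((cancel_iff x y).mpr he), ih⟩

lemma reduce_eq_self {n : ℕ} {l : List (A n)} (h : l.IsChain Rel) : FreeGroup.reduce l = l := by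
  induction l with
  | nil => rfl
  | cons x l ih =>
    have h' := List.isChain_cons.mp h
    rw [FreeGroup.reduce.cons, ih h'.2]
    cases l with
    | nil => rfl
    | cons y t =>
      have : ¬(x.1 = y.1 ∧ x.2 = !y.2) := fun hc => (h'.1 y rfl) ((cancel_iff x y).mp hc)
      show (if x.1 = y.1 ∧ x.2 = !y.2 then t else x :: y :: t) = x :: y :: t
      rw [if_neg this]

lemma toWord_mk_eq {n : ℕ} {l : List (A n)} (h : l.IsChain Rel) : (FreeGroup.mk l).toWord = l := by
  rw [FreeGroup.toWord_mk, reduce_eq_self h]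

lemma chain'_toWord {n : ℕ} (g : FreeGroup (Fin n)) : g.toWord.IsChain Rel := by
  rw [← FreeGroup.reduce_toWord]; exact chain'_reduce _

/-- all lists of length `m` -/
def LL (n m : ℕ) : Finset (List (A n)) :=
  (Finset.univ : Finset (Fin m → A n)).image List.ofFn

lemma mem_LL {n m : ℕ} {l : List (A n)} : l ∈ LL n m ↔ l.length = m := by
  constructor
  · intro h
    obtain ⟨f, -, rfl⟩ := Finset.mem_image.mp h
    simp
  · intro h
    subst h
    exact Finset.mem_image.mpr ⟨l.get, Finset.mem_univ _, List.ofFn_get l⟩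

/-- reduced words of length `m` -/
def RW (n m : ℕ) : Finset (List (A n)) := (LL n m).filter (fun l => l.IsChain Rel)

lemma mem_RW {n m : ℕ} {l : List (A n)} : l ∈ RW n m ↔ l.length = m ∧ l.IsChain Rel := by
  simp [RW, mem_LL]


noncomputable section

variable {n : ℕ} (u : Fin n → ℝ)

def wt (l : List (A n)) : ℝ := (l.map fun x => u x.1).prod

@[simp] lemma wt_nil : wt u [] = 1 := rfl

@[simp] lemma wt_cons (x : A n) (l : List (A n)) : wt u (x :: l) = u x.1 * wt u l := by
  simp [wt]

lemma wt_nonneg (hu : ∀ i, 0 ≤ u i) (l : List (A n)) : 0 ≤ wt u l := by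
  induction l with
  | nil => simp
  | cons x l ih => rw [wt_cons]; exact mul_nonneg (hu x.1) ih

def T (m : ℕ) : ℝ := (RW n m).sum (wt u)

def W (x : A n) (m : ℕ) : ℝ := ((RW n m).filter (fun l => l.head? = some x)).sum (wt u)

lemma T_nonneg (hu : ∀ i, 0 ≤ u i) (m : ℕ) : 0 ≤ T u m :=
  Finset.sum_nonneg fun l _ => wt_nonneg u hu l

lemma W_nonneg (hu : ∀ i, 0 ≤ u i) (x : A n) (m : ℕ) : 0 ≤ W u x m :=
  Finset.sum_nonneg fun l _ => wt_nonneg u hu l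

lemma RW_zero : RW n 0 = {([] : List (A n))} := by
  ext l; simp [mem_RW, List.length_eq_zero_iff]
  rintro rfl; simp

@[simp] lemma T_zero : T u 0 = 1 := by
  rw [T, RW_zero, Finset.sum_singleton, wt_nil]

lemma W_one (x : A n) : W u x 1 = u x.1 := by
  have h : (RW n 1).filter (fun l => l.head? = some x) = {[x]} := by
    ext l
    simp only [Finset.mem_filter, mem_RW, Finset.mem_singleton]
    constructor
    · rintro ⟨⟨hlen, -⟩, hh⟩
      rcases l with _ | ⟨a, t⟩
      · simp at hh
      · simp only [List.length_cons, Nat.succ.injEq, List.length_eq_zero_iff] at hlen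
        simp only [List.head?_cons, Option.some.injEq] at hh
        rw [hlen, hh]
    · rintro rfl
      refine ⟨⟨rfl, ?_⟩, rfl⟩
      simp
  rw [W, h, Finset.sum_singleton, wt_cons, wt_nil, mul_one]

lemma sum_fib (F : Finset (List (A n))) (f : List (A n) → ℝ) :
    F.sum f = ∑ o : Option (A n), (F.filter (fun l => l.head? = o)).sum f :=
  (Finset.sum_fiberwise_of_maps_to (fun l _ => Finset.mem_univ l.head?) f).symm

lemma T_eq_sum_W (m : ℕ) (hm : 1 ≤ m) : T u m = ∑ x : A n, W u x m := by
  rw [T, sum_fib (RW n m) (wt u), Fintype.sum_option]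
  have h : (RW n m).filter (fun l => l.head? = none) = ∅ := by
    apply Finset.filter_eq_empty_iff.mpr
    intro l hl
    rcases l with _ | ⟨a, t⟩
    · exfalso; have := (mem_RW.mp hl).1; simp at this; omega
    · simp
  rw [h, Finset.sum_empty, zero_add]
  rfl

lemma W_succ (x : A n) (m : ℕ) :
    W u x (m + 1) = u x.1 * (T u m - W u (x.1, !x.2) m) := by
  have hsub : T u m - W u (x.1, !x.2) m
      = ((RW n m).filter (fun l => ¬ l.head? = some (x.1, !x.2))).sum (wt u) := by
    have := Finset.sum_filter_add_sum_filter_not (RW n m)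
      (fun l => l.head? = some (x.1, !x.2)) (wt u)
    unfold T W
    linarith
  rw [hsub, Finset.mul_sum]
  apply Finset.sum_nbij' (i := fun l => l.tail) (j := fun t => x :: t)
  · -- maps to
    intro l hl
    simp only [Finset.mem_filter, mem_RW] at hl ⊢
    obtain ⟨⟨hlen, hch⟩, hh⟩ := hl
    have hcons : x :: l.tail = l := List.cons_head?_tail hh
    refine ⟨⟨?_, hch.tail⟩, ?_⟩
    · rw [← hcons] at hlen; simpa using hlen
    · intro hhead
      rw [← hcons] at hch
      have := (List.isChain_cons.mp hch).1 (x.1, !x.2) hhead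
      exact this rfl
  · intro t ht
    simp only [Finset.mem_filter, mem_RW] at ht ⊢
    obtain ⟨⟨hlen, hch⟩, hh⟩ := ht
    refine ⟨⟨by simp [hlen], ?_⟩, rfl⟩
    refine List.isChain_cons.mpr ⟨?_, hch⟩
    intro y hy
    intro he
    apply hh
    rw [he] at hy
    rcases t with _ | ⟨a, s⟩
    · simp at hy
    · simpa using hy
  · intro l hl
    simp only [Finset.mem_filter] at hl
    exact List.cons_head?_tail hl.2
  · intro t _
    rfl
  · intro l hl
    simp only [Finset.mem_filter] at hl
    conv_lhs => rw [← List.cons_head?_tail hl.2]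
    rw [wt_cons]


def v (x : A n) : ℝ := u x.1 / (1 + u x.1)

def Phi : ℝ := ∑ x : A n, v u x

variable {u}

section Bounds

variable (hu0 : ∀ i, 0 < u i)

include hu0

lemma one_add_pos (i : Fin n) : (0:ℝ) < 1 + u i := by linarith [hu0 i]

lemma v_pos (x : A n) : 0 < v u x := div_pos (hu0 x.1) (one_add_pos hu0 x.1)

lemma Phi_nonneg : 0 ≤ Phi u := Finset.sum_nonneg fun x _ => (v_pos hu0 x).le

lemma u_eq (x : A n) : u x.1 = (1 + u x.1) * v u x := by
  rw [v, mul_div_cancel₀]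
  exact (one_add_pos hu0 x.1).ne'

omit hu0 in
lemma sum_v_erase (z : A n) :
    ∑ y ∈ Finset.univ.erase z, v u y = Phi u - v u z := by
  rw [Phi, eq_sub_iff_add_eq, Finset.sum_erase_add]
  exact Finset.mem_univ z

omit hu0 in
lemma W_zero_head (z : A n) : W u z 0 = 0 := by
  rw [W, RW_zero, Finset.filter_singleton]
  simp

omit hu0 in
lemma sum_W_erase (z : A n) (m : ℕ) :
    T u (m + 1) - W u z (m + 1) = ∑ y ∈ Finset.univ.erase z, W u y (m + 1) := by
  rw [T_eq_sum_W u (m + 1) (by omega), eq_comm,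
    Finset.sum_erase_eq_sub (Finset.mem_univ _)]

lemma W_le (hu1 : ∀ i, u i < 1) (hΦ : Phi u ≤ 1) :
    ∀ m, ∀ x : A n, W u x (m + 1) ≤ 2 * Phi u ^ m * v u x := by
  intro m
  induction m with
  | zero =>
    intro x
    rw [W_succ, T_zero, W_zero_head, sub_zero, mul_one, pow_zero]
    nlinarith [v_pos hu0 x, hu0 x.1, hu1 x.1, u_eq hu0 x]
  | succ m ih =>
    intro x
    rw [W_succ]
    have hT : T u (m + 1) - W u (x.1, !x.2) (m + 1)
        ≤ 2 * Phi u ^ m * (Phi u - v u x) := by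
      rw [sum_W_erase]
      have h2 : ∑ y ∈ Finset.univ.erase (x.1, !x.2), W u y (m+1)
          ≤ ∑ y ∈ Finset.univ.erase (x.1, !x.2), 2 * Phi u ^ m * v u y :=
        Finset.sum_le_sum fun y _ => ih y
      rw [← Finset.mul_sum, sum_v_erase] at h2
      exact h2
    have hx := hu0 x.1
    have hP : 0 ≤ Phi u ^ m := pow_nonneg (Phi_nonneg hu0) m
    have heq : u x.1 = (1 + u x.1) * v u x := u_eq hu0 x
    have hv := v_pos hu0 x
    have h3 : u x.1 * (Phi u - v u x) ≤ Phi u * v u x := by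
      nlinarith [mul_nonneg (mul_nonneg hx.le hv.le) (sub_nonneg.mpr hΦ)]
    calc u x.1 * (T u (m+1) - W u (x.1, !x.2) (m+1))
        ≤ u x.1 * (2 * Phi u ^ m * (Phi u - v u x)) :=
          mul_le_mul_of_nonneg_left hT hx.le
      _ = 2 * Phi u ^ m * (u x.1 * (Phi u - v u x)) := by ring
      _ ≤ 2 * Phi u ^ m * (Phi u * v u x) :=
          mul_le_mul_of_nonneg_left h3 (by positivity)
      _ = 2 * Phi u ^ (m+1) * v u x := by ring

lemma W_ge (hΦ : 1 ≤ Phi u) :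
    ∀ m, ∀ x : A n, Phi u ^ m * v u x ≤ W u x (m + 1) := by
  intro m
  induction m with
  | zero =>
    intro x
    rw [W_succ, T_zero, W_zero_head, sub_zero, mul_one, pow_zero]
    nlinarith [v_pos hu0 x, hu0 x.1, u_eq hu0 x]
  | succ m ih =>
    intro x
    rw [W_succ]
    have hT : Phi u ^ m * (Phi u - v u x) ≤ T u (m + 1) - W u (x.1, !x.2) (m + 1) := by
      rw [sum_W_erase]
      have h2 : ∑ y ∈ Finset.univ.erase (x.1, !x.2), Phi u ^ m * v u y
          ≤ ∑ y ∈ Finset.univ.erase (x.1, !x.2), W u y (m+1) :=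
        Finset.sum_le_sum fun y _ => ih y
      rw [← Finset.mul_sum, sum_v_erase] at h2
      exact h2
    have hx := hu0 x.1
    have hP : 0 ≤ Phi u ^ m := pow_nonneg (Phi_nonneg hu0) m
    have heq : u x.1 = (1 + u x.1) * v u x := u_eq hu0 x
    have hv := v_pos hu0 x
    have h3 : Phi u * v u x ≤ u x.1 * (Phi u - v u x) := by
      nlinarith [mul_nonneg (mul_nonneg hx.le hv.le) (sub_nonneg.mpr hΦ)]
    calc Phi u ^ (m+1) * v u x = Phi u ^ m * (Phi u * v u x) := by ring
      _ ≤ Phi u ^ m * (u x.1 * (Phi u - v u x)) := mul_le_mul_of_nonneg_left h3 hP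
      _ = u x.1 * (Phi u ^ m * (Phi u - v u x)) := by ring
      _ ≤ u x.1 * (T u (m+1) - W u (x.1, !x.2) (m+1)) :=
          mul_le_mul_of_nonneg_left hT hx.le

lemma T_le (hu1 : ∀ i, u i < 1) (hΦ : Phi u ≤ 1) (m : ℕ) : T u m ≤ 2 * Phi u ^ m := by
  cases m with
  | zero => simp
  | succ m =>
    rw [T_eq_sum_W u (m+1) (by omega)]
    calc ∑ x : A n, W u x (m+1) ≤ ∑ x : A n, 2 * Phi u ^ m * v u x :=
          Finset.sum_le_sum fun x _ => W_le hu0 hu1 hΦ m x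
      _ = 2 * Phi u ^ m * Phi u := by rw [← Finset.mul_sum]; rfl
      _ = 2 * Phi u ^ (m+1) := by ring

lemma T_ge (hΦ : 1 ≤ Phi u) (m : ℕ) : Phi u ^ m ≤ T u m := by
  cases m with
  | zero => simp
  | succ m =>
    rw [T_eq_sum_W u (m+1) (by omega)]
    calc Phi u ^ (m+1) = Phi u ^ m * Phi u := by ring
      _ = ∑ x : A n, Phi u ^ m * v u x := by rw [← Finset.mul_sum]; rfl
      _ ≤ ∑ x : A n, W u x (m+1) := Finset.sum_le_sum fun x _ => W_ge hu0 hΦ m x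

end Bounds

section Count

variable {n : ℕ} (r : Fin n → ℝ) (s : ℝ)

/-- weighted length of a list -/
def ell (l : List (A n)) : ℝ := (l.map fun x => - Real.log (r x.1)).sum

@[simp] lemma ell_nil : ell r [] = 0 := rfl

@[simp] lemma ell_cons (x : A n) (l : List (A n)) :
    ell r (x :: l) = - Real.log (r x.1) + ell r l := by simp [ell]

lemma wlen_eq (g : FreeGroup (Fin n)) : Cogrowth.wlen r g = ell r g.toWord := rfl

def Cone : ℝ := ∑ i, - Real.log (r i)

variable (hn : 2 ≤ n) (hr : ∀ i, 0 < r i) (hrsum : ∑ i, r i = 1/2)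

include hn hr hrsum

lemma r_lt_half (i : Fin n) : r i < 1/2 := by
  have hnt : Nontrivial (Fin n) := Fin.nontrivial_iff_two_le.mpr hn
  obtain ⟨j, hj⟩ := exists_ne i
  have hsub : r i + ∑ k ∈ Finset.univ.erase i, r k = 1/2 := by
    rw [Finset.add_sum_erase _ _ (Finset.mem_univ i)]; exact hrsum
  have hpos : r j ≤ ∑ k ∈ Finset.univ.erase i, r k :=
    Finset.single_le_sum (fun k _ => (hr k).le)
      (Finset.mem_erase.mpr ⟨hj, Finset.mem_univ j⟩)
  linarith [hr j]

lemma log2_le (i : Fin n) : Real.log 2 ≤ - Real.log (r i) := by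
  have h1 : Real.log (r i) ≤ Real.log (1/2) :=
    Real.log_le_log (hr i) (r_lt_half r hn hr hrsum i).le
  rw [one_div, Real.log_inv] at h1
  linarith

omit hn hr hrsum in
lemma log2_pos : (0:ℝ) < Real.log 2 := Real.log_pos one_lt_two

lemma nlog_le_Cone (i : Fin n) : - Real.log (r i) ≤ Cone r :=
  Finset.single_le_sum
    (fun j _ => le_trans (log2_pos).le (log2_le r hn hr hrsum j)) (Finset.mem_univ i)

lemma le_ell (l : List (A n)) : Real.log 2 * l.length ≤ ell r l := by
  induction l with
  | nil => simp
  | cons x l ih =>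
    rw [ell_cons]
    have := log2_le r hn hr hrsum x.1
    push_cast [List.length_cons]
    nlinarith

lemma ell_nonneg (l : List (A n)) : 0 ≤ ell r l :=
  le_trans (by positivity) (le_ell r hn hr hrsum l)

lemma ell_le (l : List (A n)) : ell r l ≤ Cone r * l.length := by
  induction l with
  | nil => simp
  | cons x l ih =>
    rw [ell_cons]
    have := nlog_le_Cone r hn hr hrsum x.1
    push_cast [List.length_cons]
    nlinarith

omit hn hrsum in
lemma hu0 (hs : 0 < s) (i : Fin n) : 0 < Cogrowth.Hmap r s i :=
  Real.rpow_pos_of_pos (hr i) s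

lemma hu1 (hs : 0 < s) (i : Fin n) : Cogrowth.Hmap r s i < 1 :=
  Real.rpow_lt_one (hr i).le (lt_trans (r_lt_half r hn hr hrsum i) (by norm_num)) hs

omit hn hrsum in
lemma wt_eq_exp (l : List (A n)) :
    wt (Cogrowth.Hmap r s) l = Real.exp (-(s * ell r l)) := by
  induction l with
  | nil => simp
  | cons x l ih =>
    rw [wt_cons, ih, ell_cons]
    show (r x.1) ^ s * _ = _
    rw [Real.rpow_def_of_pos (hr x.1), ← Real.exp_add]
    congr 1
    ring

lemma finite_GS (R : ℝ) : {g : FreeGroup (Fin n) | Cogrowth.wlen r g ≤ R}.Finite := by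
  have h2 : (0:ℝ) < Real.log 2 := Real.log_pos one_lt_two
  apply Set.Finite.subset (Set.Finite.preimage
    (Function.Injective.injOn FreeGroup.toWord_injective)
    (List.finite_length_le (A n) ⌈R / Real.log 2⌉₊))
  intro g hg
  simp only [Set.mem_setOf_eq] at hg
  simp only [Set.mem_preimage, Set.mem_setOf_eq]
  have h1 : Real.log 2 * g.toWord.length ≤ R :=
    le_trans (le_ell r hn hr hrsum g.toWord) (by rw [← wlen_eq]; exact hg)
  have h3 : (g.toWord.length : ℝ) ≤ R / Real.log 2 := by
    rw [le_div_iff₀ h2]; linarith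
  exact_mod_cast h3.trans (Nat.le_ceil _)

def Nc (R : ℝ) : ℕ :=
  Nat.card {g : FreeGroup (Fin n) // g ∈ (⊤ : Subgroup (FreeGroup (Fin n)))
    ∧ Cogrowth.wlen r g ≤ R}

lemma Nc_eq (R : ℝ) : Nc r R = (finite_GS r hn hr hrsum R).toFinset.card := by
  rw [Nc]
  have e1 : Nat.card {g : FreeGroup (Fin n) // g ∈ (⊤ : Subgroup (FreeGroup (Fin n)))
      ∧ Cogrowth.wlen r g ≤ R}
      = Nat.card {g : FreeGroup (Fin n) | Cogrowth.wlen r g ≤ R} :=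
    Nat.card_congr (Equiv.subtypeEquivRight (fun g => by simp [Set.mem_setOf_eq]))
  rw [e1, Nat.card_eq_card_finite_toFinset (finite_GS r hn hr hrsum R)]

lemma one_le_Nc (R : ℝ) (hR : 0 ≤ R) : 1 ≤ Nc r R := by
  rw [Nc_eq r hn hr hrsum]
  refine Finset.card_pos.mpr ⟨1, ?_⟩
  rw [Set.Finite.mem_toFinset]
  show Cogrowth.wlen r 1 ≤ R
  rw [wlen_eq, FreeGroup.toWord_one]
  simpa using hR

lemma Nc_mono {R R' : ℝ} (h : R ≤ R') : Nc r R ≤ Nc r R' := by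
  rw [Nc_eq r hn hr hrsum, Nc_eq r hn hr hrsum]
  apply Finset.card_le_card
  intro g hg
  rw [Set.Finite.mem_toFinset] at hg ⊢
  exact le_trans hg h

omit hn hr hrsum in
lemma geom_le {q : ℝ} (h0 : 0 ≤ q) (h1 : q < 1) (K : ℕ) :
    ∑ i ∈ Finset.range K, q ^ i ≤ (1 - q)⁻¹ := by
  have hsum := (summable_geometric_of_lt_one h0 h1).sum_le_tsum (Finset.range K)
    (fun i _ => pow_nonneg h0 i)
  rwa [tsum_geometric_of_lt_one h0 h1] at hsum

lemma Nc_le (hs : 0 < s) (hΦ : Phi (Cogrowth.Hmap r s) < 1) (R : ℝ) :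
    (Nc r R : ℝ) ≤ Real.exp (s * R) * (2 * (1 - Phi (Cogrowth.Hmap r s))⁻¹) := by
  classical
  set u := Cogrowth.Hmap r s with hu
  have hu0' : ∀ i, 0 < u i := hu0 r s hr hs
  have hu0'' : ∀ i, (0:ℝ) ≤ u i := fun i => (hu0' i).le
  have hu1' : ∀ i, u i < 1 := hu1 r s hn hr hrsum hs
  set F := (finite_GS r hn hr hrsum R).toFinset with hF
  set M := ⌈R / Real.log 2⌉₊ with hM
  have hcard : (F.card : ℝ) * Real.exp (-(s*R)) ≤ F.sum (fun g => wt u g.toWord) := by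
    have hb : ∀ g ∈ F, Real.exp (-(s*R)) ≤ wt u g.toWord := by
      intro g hg
      rw [Set.Finite.mem_toFinset] at hg
      rw [wt_eq_exp r s hr, Real.exp_le_exp, neg_le_neg_iff]
      rw [← wlen_eq]
      exact mul_le_mul_of_nonneg_left hg hs.le
    have := Finset.card_nsmul_le_sum F (fun g => wt u g.toWord) (Real.exp (-(s*R))) hb
    rwa [nsmul_eq_mul] at this
  have himg : F.sum (fun g => wt u g.toWord) = (F.image FreeGroup.toWord).sum (wt u) :=
    (Finset.sum_image (fun x _ y _ h => FreeGroup.toWord_injective h)).symm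
  have hsub : F.image FreeGroup.toWord ⊆ (Finset.range (M+1)).biUnion (RW n) := by
    intro l hl
    obtain ⟨g, hg, rfl⟩ := Finset.mem_image.mp hl
    rw [Set.Finite.mem_toFinset] at hg
    refine Finset.mem_biUnion.mpr ⟨g.toWord.length, Finset.mem_range.mpr ?_,
      mem_RW.mpr ⟨rfl, chain'_toWord g⟩⟩
    have h2 : (0:ℝ) < Real.log 2 := Real.log_pos one_lt_two
    have h1 : Real.log 2 * g.toWord.length ≤ R :=
      le_trans (le_ell r hn hr hrsum g.toWord) (by rw [← wlen_eq]; exact hg)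
    have h3 : (g.toWord.length : ℝ) ≤ R / Real.log 2 := by
      rw [le_div_iff₀ h2]; linarith
    have h4 : g.toWord.length ≤ M := by exact_mod_cast h3.trans (Nat.le_ceil _)
    omega
  have hmono : (F.image FreeGroup.toWord).sum (wt u)
      ≤ ((Finset.range (M+1)).biUnion (RW n)).sum (wt u) :=
    Finset.sum_le_sum_of_subset_of_nonneg hsub (fun l _ _ => wt_nonneg u hu0'' l)
  have hdisj : (↑(Finset.range (M+1)) : Set ℕ).PairwiseDisjoint (RW n) := by
    intro a _ b _ hab
    apply Finset.disjoint_left.mpr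
    intro l hla hlb
    exact hab ((mem_RW.mp hla).1.symm.trans (mem_RW.mp hlb).1)
  have hbi : ((Finset.range (M+1)).biUnion (RW n)).sum (wt u)
      = ∑ m ∈ Finset.range (M+1), T u m := Finset.sum_biUnion hdisj
  have hgeom : ∑ m ∈ Finset.range (M+1), T u m ≤ 2 * (1 - Phi u)⁻¹ := by
    calc ∑ m ∈ Finset.range (M+1), T u m
        ≤ ∑ m ∈ Finset.range (M+1), 2 * Phi u ^ m :=
          Finset.sum_le_sum (fun m _ => T_le hu0' hu1' hΦ.le m)
      _ = 2 * ∑ m ∈ Finset.range (M+1), Phi u ^ m := by rw [Finset.mul_sum]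
      _ ≤ 2 * (1 - Phi u)⁻¹ := by
          have := geom_le (Phi_nonneg hu0') hΦ (M+1)
          linarith
  have h2 : (Nc r R : ℝ) * Real.exp (-(s*R)) ≤ 2 * (1 - Phi u)⁻¹ := by
    rw [Nc_eq r hn hr hrsum]
    calc ((F.card : ℕ) : ℝ) * Real.exp (-(s*R))
        ≤ F.sum (fun g => wt u g.toWord) := hcard
      _ = (F.image FreeGroup.toWord).sum (wt u) := himg
      _ ≤ ((Finset.range (M+1)).biUnion (RW n)).sum (wt u) := hmono
      _ = ∑ m ∈ Finset.range (M+1), T u m := hbi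
      _ ≤ 2 * (1 - Phi u)⁻¹ := hgeom
  calc (Nc r R : ℝ) = (Nc r R : ℝ) * Real.exp (-(s*R)) * Real.exp (s*R) := by
        rw [mul_assoc, ← Real.exp_add]; simp
    _ ≤ 2 * (1 - Phi u)⁻¹ * Real.exp (s*R) :=
        mul_le_mul_of_nonneg_right h2 (Real.exp_pos _).le
    _ = Real.exp (s * R) * (2 * (1 - Phi u)⁻¹) := by ring

lemma le_shell (hs : 0 < s) (m : ℕ) :
    T (Cogrowth.Hmap r s) m
      ≤ ∑ k ∈ Finset.range (⌊Cone r * m⌋₊ + 1),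
          (Nc r ((k:ℝ)+1) : ℝ) * Real.exp (-(s*k)) := by
  classical
  set u := Cogrowth.Hmap r s with hu
  set K := ⌊Cone r * m⌋₊ with hK
  have hmaps : ∀ l ∈ RW n m, ⌊ell r l⌋₊ ∈ Finset.range (K+1) := by
    intro l hl
    rw [Finset.mem_range, Nat.lt_succ_iff, hK]
    apply Nat.floor_mono
    have h1 := ell_le r hn hr hrsum l
    rwa [(mem_RW.mp hl).1] at h1
  have hfib := (Finset.sum_fiberwise_of_maps_to hmaps (wt u)).symm
  show (RW n m).sum (wt u) ≤ _
  rw [hfib]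
  apply Finset.sum_le_sum
  intro k hk
  have h1 : ∀ l ∈ (RW n m).filter (fun l => ⌊ell r l⌋₊ = k),
      wt u l ≤ Real.exp (-(s*k)) := by
    intro l hl
    obtain ⟨hl1, hl2⟩ := Finset.mem_filter.mp hl
    rw [hu, wt_eq_exp r s hr, Real.exp_le_exp, neg_le_neg_iff]
    have hkl : (k:ℝ) ≤ ell r l := by
      rw [← hl2]; exact Nat.floor_le (ell_nonneg r hn hr hrsum l)
    exact mul_le_mul_of_nonneg_left hkl hs.le
  have h2 : ((RW n m).filter (fun l => ⌊ell r l⌋₊ = k)).card ≤ Nc r ((k:ℝ)+1) := by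
    rw [Nc_eq r hn hr hrsum]
    apply Finset.card_le_card_of_injOn (fun l => FreeGroup.mk l)
    · intro l hl
      obtain ⟨hl1, hl2⟩ := Finset.mem_filter.mp hl
      rw [Finset.mem_coe, Set.Finite.mem_toFinset]
      show Cogrowth.wlen r (FreeGroup.mk l) ≤ (k:ℝ)+1
      rw [wlen_eq, toWord_mk_eq (mem_RW.mp hl1).2]
      have h3 := Nat.lt_succ_floor (ell r l)
      rw [hl2] at h3
      push_cast at h3
      linarith
    · intro a ha b hb hab
      have h4 := congrArg FreeGroup.toWord hab
      rwa [toWord_mk_eq (mem_RW.mp (Finset.mem_filter.mp ha).1).2,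
        toWord_mk_eq (mem_RW.mp (Finset.mem_filter.mp hb).1).2] at h4
  calc ((RW n m).filter (fun l => ⌊ell r l⌋₊ = k)).sum (wt u)
      ≤ ((RW n m).filter (fun l => ⌊ell r l⌋₊ = k)).card • Real.exp (-(s*k)) :=
        Finset.sum_le_card_nsmul _ _ _ h1
    _ = (((RW n m).filter (fun l => ⌊ell r l⌋₊ = k)).card : ℝ) * Real.exp (-(s*k)) :=
        nsmul_eq_mul _ _
    _ ≤ (Nc r ((k:ℝ)+1) : ℝ) * Real.exp (-(s*k)) :=
        mul_le_mul_of_nonneg_right (by exact_mod_cast h2) (Real.exp_pos _).le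

omit hn hr hrsum in
lemma delta_eq :
    Cogrowth.delta r = Filter.limsup (fun R => Real.log (Nc r R) / R) Filter.atTop := rfl

lemma ev_nonneg : ∀ᶠ R in Filter.atTop, 0 ≤ Real.log (Nc r R) / R := by
  filter_upwards [Filter.eventually_ge_atTop 1] with R hR
  have h1 : 1 ≤ Nc r R := one_le_Nc r hn hr hrsum R (by linarith)
  have h2 : (0:ℝ) ≤ Real.log (Nc r R) := Real.log_nonneg (by exact_mod_cast h1)
  exact div_nonneg h2 (by linarith)

lemma hbelow : Filter.IsBoundedUnder (· ≥ ·) Filter.atTop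
    (fun R => Real.log (Nc r R) / R) :=
  ⟨0, by simpa [Filter.eventually_map] using ev_nonneg r hn hr hrsum⟩

lemma ev_le (hs : 0 < s) (hΦ : Phi (Cogrowth.Hmap r s) < 1) :
    ∀ᶠ R in Filter.atTop, Real.log (Nc r R) / R
      ≤ s + Real.log (2 * (1 - Phi (Cogrowth.Hmap r s))⁻¹) / R := by
  set C := 2 * (1 - Phi (Cogrowth.Hmap r s))⁻¹ with hC
  have hCpos : (0:ℝ) < C := by
    have h0 : (0:ℝ) < 1 - Phi (Cogrowth.Hmap r s) := by linarith
    rw [hC]; positivity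
  filter_upwards [Filter.eventually_ge_atTop 1] with R hR
  have hR0 : (0:ℝ) < R := by linarith
  have hNpos : (0:ℝ) < (Nc r R : ℝ) := by
    have := one_le_Nc r hn hr hrsum R (by linarith)
    exact_mod_cast Nat.lt_of_lt_of_le Nat.zero_lt_one this
  have h1 : Real.log (Nc r R) ≤ s * R + Real.log C := by
    calc Real.log (Nc r R) ≤ Real.log (Real.exp (s*R) * C) :=
        Real.log_le_log hNpos (Nc_le r s hn hr hrsum hs hΦ R)
      _ = s*R + Real.log C := by
          rw [Real.log_mul (Real.exp_pos _).ne' hCpos.ne', Real.log_exp]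
  have h2 : s + Real.log C / R = (s * R + Real.log C) / R := by
    field_simp
  rw [h2, div_le_div_iff_of_pos_right hR0]
  exact h1

-- aux
omit hn hr hrsum in
lemma tendsto_aux (a c : ℝ) :
    Filter.Tendsto (fun R : ℝ => a + c / R) Filter.atTop (nhds a) := by
  have h := Filter.Tendsto.div_atTop (tendsto_const_nhds (x := c)) Filter.tendsto_id
  simpa using tendsto_const_nhds.add h

lemma delta_le_of (hs : 0 < s) (hΦ : Phi (Cogrowth.Hmap r s) < 1) :
    Cogrowth.delta r ≤ s := by
  set C := 2 * (1 - Phi (Cogrowth.Hmap r s))⁻¹ with hC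
  have htend := tendsto_aux s (Real.log C)
  have hco : Filter.IsCoboundedUnder (· ≤ ·) Filter.atTop
      (fun R => Real.log (Nc r R) / R) :=
    (hbelow r hn hr hrsum).isCoboundedUnder_le
  have hb : Filter.IsBoundedUnder (· ≤ ·) Filter.atTop
      (fun R : ℝ => s + Real.log C / R) := htend.isBoundedUnder_le
  rw [delta_eq r]
  calc Filter.limsup (fun R => Real.log (Nc r R) / R) Filter.atTop
      ≤ Filter.limsup (fun R : ℝ => s + Real.log C / R) Filter.atTop :=
        Filter.limsup_le_limsup (ev_le r s hn hr hrsum hs hΦ) hco hb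
    _ = s := htend.limsup_eq

omit hn hr hrsum in
lemma Phi_eq_sum (u : Fin n → ℝ) : Phi u = ∑ i, 2 * (u i / (1 + u i)) := by
  rw [Phi, Fintype.sum_prod_type]
  refine Finset.sum_congr rfl fun i _ => ?_
  rw [Fintype.sum_bool]
  show u i/(1+u i) + u i/(1+u i) = 2*(u i/(1+u i))
  ring

omit hn hr hrsum in
lemma div_one_add_lt {a b : ℝ} (ha : 0 < a) (hab : a < b) : a/(1+a) < b/(1+b) := by
  rw [div_lt_div_iff₀ (by linarith) (by linarith)]; nlinarith

lemma Phi_anti {s₁ s₂ : ℝ} (h0 : 0 ≤ s₁) (h12 : s₁ < s₂) :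
    Phi (Cogrowth.Hmap r s₂) < Phi (Cogrowth.Hmap r s₁) := by
  rw [Phi_eq_sum _, Phi_eq_sum _]
  have hne : (Finset.univ : Finset (Fin n)).Nonempty := ⟨⟨0, by omega⟩, Finset.mem_univ _⟩
  apply Finset.sum_lt_sum_of_nonempty hne
  intro i _
  have h1 : Cogrowth.Hmap r s₂ i < Cogrowth.Hmap r s₁ i :=
    Real.rpow_lt_rpow_of_exponent_gt (hr i)
      (lt_trans (r_lt_half r hn hr hrsum i) (by norm_num)) h12
  have h2 : 0 < Cogrowth.Hmap r s₂ i := Real.rpow_pos_of_pos (hr i) _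
  have h3 := div_one_add_lt h2 h1
  linarith

lemma Phi_zero_eq : Phi (Cogrowth.Hmap r 0) = n := by
  rw [Phi_eq_sum _]
  have h1 : ∀ i : Fin n, Cogrowth.Hmap r 0 i = 1 := fun i => by
    show r i ^ (0:ℝ) = 1; exact Real.rpow_zero _
  rw [Finset.sum_congr rfl (fun i _ =>
    show 2*(Cogrowth.Hmap r 0 i/(1+Cogrowth.Hmap r 0 i)) = 1 by rw [h1 i]; norm_num)]
  simp

lemma Phi_one_lt : Phi (Cogrowth.Hmap r 1) < 1 := by
  rw [Phi_eq_sum _]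
  have hne : (Finset.univ : Finset (Fin n)).Nonempty := ⟨⟨0, by omega⟩, Finset.mem_univ _⟩
  have h1 : ∀ i : Fin n, Cogrowth.Hmap r 1 i = r i := fun i => by
    show r i ^ (1:ℝ) = r i; exact Real.rpow_one _
  calc ∑ i, 2*(Cogrowth.Hmap r 1 i/(1+Cogrowth.Hmap r 1 i))
      < ∑ i, 2 * r i := by
        apply Finset.sum_lt_sum_of_nonempty hne
        intro i _
        rw [h1 i]
        have h2 := hr i
        have h3 : r i/(1+r i) < r i := by
          rw [div_lt_iff₀ (by linarith)]; nlinarith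
        linarith
    _ = 1 := by rw [← Finset.mul_sum, hrsum]; norm_num

lemma Phi_cont : Continuous (fun t : ℝ => Phi (Cogrowth.Hmap r t)) := by
  have hrw : (fun t : ℝ => Phi (Cogrowth.Hmap r t))
      = fun t => ∑ i, 2*((r i ^ t)/(1 + r i ^ t)) := by
    funext t; rw [Phi_eq_sum _]; rfl
  rw [hrw]
  apply continuous_finset_sum
  intro i _
  have hc : Continuous (fun t : ℝ => r i ^ t) := by
    have h1 : (fun t : ℝ => r i ^ t) = fun t => Real.exp (Real.log (r i) * t) :=
      funext fun t => Real.rpow_def_of_pos (hr i) t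
    rw [h1]; exact Real.continuous_exp.comp (continuous_const.mul continuous_id)
  apply continuous_const.mul
  apply hc.div (continuous_const.add hc)
  intro t
  have h2 := Real.rpow_pos_of_pos (hr i) t
  intro hzero
  linarith [show (1:ℝ) + r i ^ t = 0 from hzero]

lemma exists_root : ∃ t, 0 < t ∧ t < 1 ∧ Phi (Cogrowth.Hmap r t) = 1 := by
  have hiv := intermediate_value_Ioo' (f := fun t => Phi (Cogrowth.Hmap r t))
    (zero_le_one) ((Phi_cont r hn hr hrsum).continuousOn)
  have h1 : (1:ℝ) ∈ Set.Ioo (Phi (Cogrowth.Hmap r 1)) (Phi (Cogrowth.Hmap r 0)) := by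
    constructor
    · exact Phi_one_lt r hn hr hrsum
    · rw [Phi_zero_eq r hn hr hrsum]
      have : (1:ℕ) < n := by omega
      exact_mod_cast this
  obtain ⟨t, ht, hft⟩ := hiv h1
  exact ⟨t, ht.1, ht.2, hft⟩

omit hn hr hrsum in
lemma lfun_eq (u : Fin n → ℝ) (hu : ∀ i, 0 < u i) :
    Cogrowth.lfun u = (Phi u - 1) * ∏ i, (1 + u i) := by
  have hkey : ∀ j : Fin n, u j * ∏ k ∈ Finset.univ.erase j, (1 + u k)
      = (u j/(1+u j)) * ∏ i, (1 + u i) := by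
    intro j
    rw [← Finset.mul_prod_erase Finset.univ (fun k => 1 + u k) (Finset.mem_univ j)]
    have h1 : (0:ℝ) < 1 + u j := by linarith [hu j]
    field_simp
  rw [Cogrowth.lfun, Phi_eq_sum _, Finset.sum_congr rfl (fun j _ => hkey j),
    ← Finset.sum_mul, ← Finset.mul_sum]
  ring

omit hn hr hrsum in
lemma prod_one_add_pos (u : Fin n → ℝ) (hu : ∀ i, 0 < u i) :
    0 < ∏ i, (1 + u i) :=
  Finset.prod_pos fun i _ => by linarith [hu i]

lemma habove : Filter.IsBoundedUnder (· ≤ ·) Filter.atTop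
    (fun R => Real.log (Nc r R) / R) :=
  ((tendsto_aux 1 (Real.log (2 * (1 - Phi (Cogrowth.Hmap r 1))⁻¹))).isBoundedUnder_le).mono_le
    (ev_le r 1 hn hr hrsum one_pos (Phi_one_lt r hn hr hrsum))

lemma delta_nonneg : 0 ≤ Cogrowth.delta r := by
  have hb := habove r hn hr hrsum
  rw [delta_eq r]
  exact Filter.le_limsup_of_frequently_le
    ((ev_nonneg r hn hr hrsum).frequently) hb

lemma delta_ge_of (hs : 0 < s) (hΦ : 1 < Phi (Cogrowth.Hmap r s)) :
    s ≤ Cogrowth.delta r := by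
  classical
  set u := Cogrowth.Hmap r s with hu
  have hu0' : ∀ i, 0 < u i := hu0 r s hr hs
  by_contra hlt
  push_neg at hlt
  have hd0 : 0 ≤ Cogrowth.delta r := delta_nonneg r hn hr hrsum
  set s' := (Cogrowth.delta r + s)/2 with hs'
  have h1 : Cogrowth.delta r < s' := by rw [hs']; linarith
  have h2 : s' < s := by rw [hs']; linarith
  have h3 : 0 < s' := by rw [hs']; linarith
  have hev : ∀ᶠ R in Filter.atTop, Real.log (Nc r R)/R < s' := by
    apply Filter.eventually_lt_of_limsup_lt _ (habove r hn hr hrsum)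
    rw [← delta_eq r]; exact h1
  obtain ⟨R₀', hR₀'⟩ := Filter.eventually_atTop.mp
    (hev.and (Filter.eventually_ge_atTop 1))
  set R₁ := max R₀' 1 with hR₁
  have hR₁1 : (1:ℝ) ≤ R₁ := le_max_right _ _
  have hN : ∀ R, R₁ ≤ R → (Nc r R : ℝ) ≤ Real.exp (s' * R) := by
    intro R hR
    obtain ⟨hflt, hRge1⟩ := hR₀' R (le_trans (le_max_left _ _) hR)
    have hRpos : (0:ℝ) < R := by linarith
    have hN1 : 1 ≤ Nc r R := one_le_Nc r hn hr hrsum R (by linarith)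
    have hNpos : (0:ℝ) < (Nc r R : ℝ) := by exact_mod_cast hN1
    have hlog : Real.log (Nc r R) ≤ s' * R := by
      have h4 := (div_lt_iff₀ hRpos).mp hflt
      linarith
    calc (Nc r R : ℝ) = Real.exp (Real.log (Nc r R)) := (Real.exp_log hNpos).symm
      _ ≤ Real.exp (s' * R) := Real.exp_le_exp.mpr hlog
  have hNk : ∀ k : ℕ, (Nc r ((k:ℝ)+1) : ℝ)
      ≤ Real.exp (s' * R₁) * Real.exp (s' * k) := by
    intro k
    by_cases hk : R₁ ≤ (k:ℝ)+1
    · calc (Nc r ((k:ℝ)+1) : ℝ) ≤ Real.exp (s' * ((k:ℝ)+1)) := hN _ hk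
        _ ≤ Real.exp (s' * R₁) * Real.exp (s' * k) := by
            rw [← Real.exp_add, Real.exp_le_exp]
            nlinarith [mul_nonneg h3.le (sub_nonneg.mpr hR₁1)]
    · push_neg at hk
      have h5 : Nc r ((k:ℝ)+1) ≤ Nc r R₁ := Nc_mono r hn hr hrsum (le_of_lt hk)
      calc (Nc r ((k:ℝ)+1) : ℝ) ≤ (Nc r R₁ : ℝ) := by exact_mod_cast h5
        _ ≤ Real.exp (s' * R₁) := hN R₁ le_rfl
        _ ≤ Real.exp (s' * R₁) * Real.exp (s' * k) := by
            nlinarith [Real.exp_pos (s'*R₁),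
              Real.one_le_exp (by positivity : (0:ℝ) ≤ s'*(k:ℝ))]
  set q := Real.exp (s' - s) with hq
  have hq0 : 0 ≤ q := (Real.exp_pos _).le
  have hq1 : q < 1 := by
    rw [hq, show (1:ℝ) = Real.exp 0 from (Real.exp_zero).symm]
    exact Real.exp_lt_exp.mpr (by linarith)
  have hC3 : ∀ m, T u m ≤ Real.exp (s' * R₁) * (1 - q)⁻¹ := by
    intro m
    calc T u m
        ≤ ∑ k ∈ Finset.range (⌊Cone r * m⌋₊ + 1),
            (Nc r ((k:ℝ)+1) : ℝ) * Real.exp (-(s*k)) :=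
          le_shell r s hn hr hrsum hs m
      _ ≤ ∑ k ∈ Finset.range (⌊Cone r * m⌋₊ + 1), Real.exp (s' * R₁) * q ^ k := by
          apply Finset.sum_le_sum
          intro k _
          have h6 : q ^ k = Real.exp ((k:ℝ) * (s' - s)) := by
            rw [hq, ← Real.exp_nat_mul]
          calc (Nc r ((k:ℝ)+1) : ℝ) * Real.exp (-(s*k))
              ≤ (Real.exp (s' * R₁) * Real.exp (s' * k)) * Real.exp (-(s*k)) :=
                mul_le_mul_of_nonneg_right (hNk k) (Real.exp_pos _).le
            _ = Real.exp (s' * R₁) * q ^ k := by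
                rw [h6, mul_assoc, ← Real.exp_add]
                congr 2
                ring
      _ = Real.exp (s' * R₁) * ∑ k ∈ Finset.range (⌊Cone r * m⌋₊ + 1), q ^ k := by
          rw [Finset.mul_sum]
      _ ≤ Real.exp (s' * R₁) * (1 - q)⁻¹ :=
          mul_le_mul_of_nonneg_left (geom_le hq0 hq1 _) (Real.exp_pos _).le
  obtain ⟨m, hm⟩ := pow_unbounded_of_one_lt (Real.exp (s' * R₁) * (1 - q)⁻¹) hΦ
  have h7 := T_ge hu0' hΦ.le m
  have h8 := hC3 m
  linarith

end Count

end

end Cog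


/-- `δ(r)` is the unique `s > 0` with `l(H(r,s)) = 0`. -/
theorem statement10 (n : ℕ) (hn : 2 ≤ n) (r : Fin n → ℝ) (hr : ∀ i, 0 < r i)
    (hrsum : ∑ i, r i = 1 / 2) :
    (0 < Cogrowth.delta r ∧ Cogrowth.lfun (Cogrowth.Hmap r (Cogrowth.delta r)) = 0) ∧
    ∀ s : ℝ, 0 < s → Cogrowth.lfun (Cogrowth.Hmap r s) = 0 → s = Cogrowth.delta r := by
  obtain ⟨t, ht0, ht1, htΦ⟩ := Cog.exists_root r hn hr hrsum
  have hu0t : ∀ s : ℝ, ∀ i, 0 < Cogrowth.Hmap r s i := fun s i =>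
    Real.rpow_pos_of_pos (hr i) s
  -- delta = t
  have hdle : Cogrowth.delta r ≤ t := by
    by_contra h
    push_neg at h
    set t' := (t + Cogrowth.delta r)/2 with ht'
    have h1 : t < t' := by rw [ht']; linarith
    have h2 : t' < Cogrowth.delta r := by rw [ht']; linarith
    have h3 : Cog.Phi (Cogrowth.Hmap r t') < 1 := by
      rw [← htΦ]
      exact Cog.Phi_anti r hn hr hrsum ht0.le h1
    have h4 := Cog.delta_le_of r t' hn hr hrsum (by linarith) h3
    linarith
  have hdge : t ≤ Cogrowth.delta r := by
    by_contra h
    push_neg at h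
    have hd0 : 0 ≤ Cogrowth.delta r := Cog.delta_nonneg r hn hr hrsum
    set t' := (Cogrowth.delta r + t)/2 with ht'
    have h1 : t' < t := by rw [ht']; linarith
    have h2 : Cogrowth.delta r < t' := by rw [ht']; linarith
    have h0' : 0 < t' := by rw [ht']; linarith
    have h3 : 1 < Cog.Phi (Cogrowth.Hmap r t') := by
      rw [← htΦ]
      exact Cog.Phi_anti r hn hr hrsum h0'.le h1
    have h4 := Cog.delta_ge_of r t' hn hr hrsum h0' h3
    linarith
  have hδ : Cogrowth.delta r = t := le_antisymm hdle hdge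
  refine ⟨⟨by rw [hδ]; exact ht0, ?_⟩, ?_⟩
  · rw [Cog.lfun_eq (Cogrowth.Hmap r (Cogrowth.delta r)) (hu0t _), hδ, htΦ]
    ring
  · intro s hs hl
    rw [Cog.lfun_eq (Cogrowth.Hmap r s) (hu0t s)] at hl
    have hΦs : Cog.Phi (Cogrowth.Hmap r s) = 1 := by
      rcases mul_eq_zero.mp hl with h | h
      · linarith [h]
      · exact absurd h (Cog.prod_one_add_pos (Cogrowth.Hmap r s) (hu0t s)).ne'
    rw [hδ]
    rcases lt_trichotomy s t with h | h | h
    · exfalso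
      have := Cog.Phi_anti r hn hr hrsum hs.le h
      rw [hΦs, htΦ] at this
      exact lt_irrefl _ this
    · exact h
    · exfalso
      have := Cog.Phi_anti r hn hr hrsum ht0.le h
      rw [hΦs, htΦ] at this
      exact lt_irrefl _ this
end

section
/- For every u = (u_1,…,u_n) ∈ (0,∞)^n with D(u) ≠ 0, one has the identity 2·(∏_{i=1}^n u_i)·D(u)·λ(u) = (∏_{j=1}^n (1 − u_j))·l(u). In particular, for u ∈ (0,1)^n, λ(u) = 0 if and only if l(u) = 0, and λ(u) and l(u) have the same sign. -/
open Filter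

/-- `2 (∏ u_i) D(u) λ(u) = (∏ (1 - u_j)) l(u)`, and for `u ∈ (0,1)^n`
the functions `λ` and `l` vanish together and have the same sign. -/
theorem statement12 (n : ℕ) (hn : 2 ≤ n) (u : Fin n → ℝ) (hu : ∀ i, 0 < u i)
    (hD : Cogrowth.Dfun u ≠ 0) :
    2 * (∏ i, u i) * Cogrowth.Dfun u * Cogrowth.lamfun u =
      (∏ j, (1 - u j)) * Cogrowth.lfun u ∧
    ((∀ i, u i < 1) →
      (Cogrowth.lamfun u = 0 ↔ Cogrowth.lfun u = 0) ∧
      (0 < Cogrowth.lamfun u ↔ 0 < Cogrowth.lfun u) ∧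
      (Cogrowth.lamfun u < 0 ↔ Cogrowth.lfun u < 0)) := by
  have hune : ∀ i, u i ≠ 0 := fun i => (hu i).ne'
  have hterm : ∀ k, u k * ((u k)⁻¹ - u k) = (1 - u k) * (1 + u k) := by
    intro k; rw [mul_sub, mul_inv_cancel₀ (hune k)]; ring
  have hprod : ∀ j : Fin n, (∏ i, u i) * ∏ k ∈ Finset.univ.erase j, ((u k)⁻¹ - u k)
      = u j * ((∏ k ∈ Finset.univ.erase j, (1 - u k)) *
          ∏ k ∈ Finset.univ.erase j, (1 + u k)) := by
    intro j
    rw [← Finset.mul_prod_erase Finset.univ u (Finset.mem_univ j), mul_assoc,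
      ← Finset.prod_mul_distrib, ← Finset.prod_mul_distrib]
    congr 1
    exact Finset.prod_congr rfl fun k _ => hterm k
  have hfull : (∏ i, u i) * ∏ l, ((u l)⁻¹ - u l)
      = (∏ j, (1 - u j)) * ∏ l, (1 + u l) := by
    rw [← Finset.prod_mul_distrib, ← Finset.prod_mul_distrib]
    exact Finset.prod_congr rfl fun k _ => hterm k
  have hS : (∏ i, u i) * ∑ j, (1 - u j) * ∏ k ∈ Finset.univ.erase j, ((u k)⁻¹ - u k)
      = (∏ j, (1 - u j)) * ∑ j, u j * ∏ k ∈ Finset.univ.erase j, (1 + u k) := by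
    rw [Finset.mul_sum, Finset.mul_sum]
    refine Finset.sum_congr rfl fun j _ => ?_
    have h1 := hprod j
    have h2 : (1 - u j) * ∏ k ∈ Finset.univ.erase j, (1 - u k)
        = ∏ j, (1 - u j) := Finset.mul_prod_erase Finset.univ (fun k => 1 - u k) (Finset.mem_univ j)
    calc (∏ i, u i) * ((1 - u j) * ∏ k ∈ Finset.univ.erase j, ((u k)⁻¹ - u k))
        = (1 - u j) * ((∏ i, u i) * ∏ k ∈ Finset.univ.erase j, ((u k)⁻¹ - u k)) := by ring
      _ = ((1 - u j) * ∏ k ∈ Finset.univ.erase j, (1 - u k)) *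
          (u j * ∏ k ∈ Finset.univ.erase j, (1 + u k)) := by rw [h1]; ring
      _ = (∏ j, (1 - u j)) * (u j * ∏ k ∈ Finset.univ.erase j, (1 + u k)) := by rw [h2]
  have hmain : 2 * (∏ i, u i) * Cogrowth.Dfun u * Cogrowth.lamfun u =
      (∏ j, (1 - u j)) * Cogrowth.lfun u := by
    unfold Cogrowth.lamfun Cogrowth.lfun
    have expand : 2 * (∏ i, u i) * Cogrowth.Dfun u * ((Cogrowth.Dfun u)⁻¹ *
        ((∑ j, (1 - u j) * ∏ k ∈ Finset.univ.erase j, ((u k)⁻¹ - u k)) -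
          (1 / 2) * ∏ l, ((u l)⁻¹ - u l)))
        = 2 * ((∏ i, u i) * ∑ j, (1 - u j) * ∏ k ∈ Finset.univ.erase j, ((u k)⁻¹ - u k))
          - (∏ i, u i) * ∏ l, ((u l)⁻¹ - u l) := by
      field_simp
    rw [expand, hS, hfull]
    ring
  refine ⟨hmain, fun hlt => ?_⟩
  have hpos : ∀ k, (0:ℝ) < (u k)⁻¹ - u k := by
    intro k
    have h1 : (1:ℝ) < (u k)⁻¹ := (one_lt_inv₀ (hu k)).mpr (hlt k)
    linarith [hlt k]
  have hDpos : 0 < Cogrowth.Dfun u := by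
    unfold Cogrowth.Dfun
    refine Finset.sum_pos (fun j _ => Finset.prod_pos fun k _ => hpos k) ?_
    exact Finset.univ_nonempty_iff.mpr (Fin.pos_iff_nonempty.mp (by omega))
  have hPpos : 0 < ∏ i, u i := Finset.prod_pos fun i _ => hu i
  have h1pos : 0 < ∏ j, (1 - u j) := Finset.prod_pos fun j _ => by linarith [hlt j]
  set c : ℝ := (∏ j, (1 - u j)) / (2 * (∏ i, u i) * Cogrowth.Dfun u) with hc
  have hcpos : 0 < c := by positivity
  have hlam : Cogrowth.lamfun u = c * Cogrowth.lfun u := by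
    rw [hc, eq_comm]
    rw [div_mul_eq_mul_div, div_eq_iff (by positivity)]
    linarith [hmain]
  refine ⟨?_, ?_, ?_⟩
  · rw [hlam]
    constructor
    · intro h
      rcases mul_eq_zero.mp h with h | h
      · exact absurd h hcpos.ne'
      · exact h
    · intro h; rw [h, mul_zero]
  · rw [hlam]
    exact mul_pos_iff_of_pos_left hcpos
  · rw [hlam]
    constructor
    · intro h; nlinarith
    · intro h; nlinarith
end

section
/- Fix p = (p_1,…,p_n) ∈ 𝒫 and define Λ_p(τ) = 1 − Σ_{i=1}^n √(τ² + 4 p_i²) + (n−1)τ for τ ∈ (0,∞). Then: (1) λ(γ_p(τ)) = Λ_p(τ) for all τ > 0; (2) the derivative of Λ_p is Λ_p'(τ) = −Σ_{i=1}^n τ/√(τ² + 4 p_i²) + (n−1); (3) there is a unique τ_0 > 0 with Λ_p'(τ_0) = 0, Λ_p attains its maximum on (0,∞) uniquely at τ_0, and Λ_p(τ_0) > 0. -/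
open Filter

section AuxStatement13

lemma aux13_hasDeriv (c τ : ℝ) (hc : 0 < c) :
    HasDerivAt (fun t : ℝ => Real.sqrt (t ^ 2 + c)) (τ / Real.sqrt (τ ^ 2 + c)) τ := by
  have hpos : 0 < τ ^ 2 + c := by positivity
  have h1 : HasDerivAt (fun t : ℝ => t ^ 2 + c) (2 * τ) τ := by
    simpa using (hasDerivAt_pow 2 τ).add_const c
  have h2 := (Real.hasDerivAt_sqrt hpos.ne').comp τ h1
  have hs : 0 < Real.sqrt (τ ^ 2 + c) := Real.sqrt_pos.mpr hpos
  exact h2.congr_deriv (by rw [div_mul_eq_mul_div, one_mul, mul_div_mul_left _ _ two_ne_zero])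

lemma aux13_mono (c : ℝ) (hc : 0 < c) :
    StrictMonoOn (fun τ : ℝ => τ / Real.sqrt (τ ^ 2 + c)) (Set.Ici 0) := by
  intro a ha b hb hab
  simp only [Set.mem_Ici] at ha hb
  have hsa : 0 < Real.sqrt (a ^ 2 + c) := Real.sqrt_pos.mpr (by positivity)
  have hsb : 0 < Real.sqrt (b ^ 2 + c) := Real.sqrt_pos.mpr (by positivity)
  simp only
  rw [div_lt_div_iff₀ hsa hsb]
  have h1 : (a * Real.sqrt (b ^ 2 + c)) ^ 2 < (b * Real.sqrt (a ^ 2 + c)) ^ 2 := by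
    rw [mul_pow, mul_pow, Real.sq_sqrt (by positivity), Real.sq_sqrt (by positivity)]
    nlinarith [mul_lt_mul_of_pos_left (show a ^ 2 < b ^ 2 by nlinarith) hc]
  exact lt_of_pow_lt_pow_left₀ 2 (by positivity) h1

lemma aux13_inv_sub {n : ℕ} (p : Fin n → ℝ) (hp : ∀ i, 0 < p i) {τ : ℝ} (hτ : 0 < τ)
    (i : Fin n) : (Cogrowth.gam p τ i)⁻¹ - Cogrowth.gam p τ i = τ / p i := by
  have hpi := hp i
  set a := τ * (p i)⁻¹ with ha
  set s := Real.sqrt (τ ^ 2 * ((p i)⁻¹) ^ 2 + 4) with hsdef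
  have hs : s ^ 2 = a ^ 2 + 4 := by
    rw [hsdef, Real.sq_sqrt (by positivity)]; ring
  have hsnn : 0 ≤ s := Real.sqrt_nonneg _
  have hui : Cogrowth.gam p τ i = (s - a) / 2 := rfl
  have hinv : (Cogrowth.gam p τ i)⁻¹ = (s + a) / 2 := by
    refine inv_eq_of_mul_eq_one_right ?_
    rw [hui]
    linear_combination hs / 4
  rw [hinv, hui, ha, div_eq_mul_inv]
  ring

lemma aux13_gam_pos {n : ℕ} (p : Fin n → ℝ) (hp : ∀ i, 0 < p i) {τ : ℝ} (hτ : 0 < τ)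
    (i : Fin n) : 0 < Cogrowth.gam p τ i := by
  have hpi := hp i
  have hui : Cogrowth.gam p τ i = (Real.sqrt (τ ^ 2 * ((p i)⁻¹) ^ 2 + 4) - τ * (p i)⁻¹) / 2 := rfl
  have hgt : τ * (p i)⁻¹ < Real.sqrt (τ ^ 2 * ((p i)⁻¹) ^ 2 + 4) := by
    nlinarith [Real.sq_sqrt (show (0:ℝ) ≤ τ ^ 2 * ((p i)⁻¹) ^ 2 + 4 by positivity),
      Real.sqrt_nonneg (τ ^ 2 * ((p i)⁻¹) ^ 2 + 4), mul_pos hτ (inv_pos.mpr hpi)]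
  rw [hui]; linarith

lemma aux13_sqrt {n : ℕ} (p : Fin n → ℝ) (hp : ∀ i, 0 < p i) {τ : ℝ} (hτ : 0 < τ)
    (i : Fin n) :
    Real.sqrt (τ ^ 2 + 4 * p i ^ 2) = 2 * (Cogrowth.gam p τ i * p i) + τ := by
  have hpi := hp i
  have h1 : τ ^ 2 + 4 * p i ^ 2 = (p i) ^ 2 * (τ ^ 2 * ((p i)⁻¹) ^ 2 + 4) := by
    field_simp
  rw [h1, Real.sqrt_mul (sq_nonneg _), Real.sqrt_sq hpi.le]
  have hui : Cogrowth.gam p τ i = (Real.sqrt (τ ^ 2 * ((p i)⁻¹) ^ 2 + 4) - τ * (p i)⁻¹) / 2 := rfl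
  rw [hui]
  field_simp
  ring

lemma aux13_lamfun {n : ℕ} (p : Fin n → ℝ) (hp : ∀ i, 0 < p i)
    (hpsum : ∑ i, p i = 1 / 2) {τ : ℝ} (hτ : 0 < τ) :
    Cogrowth.lamfun (Cogrowth.gam p τ) =
      1 - 2 * (∑ i, Cogrowth.gam p τ i * p i) - τ := by
  set u := Cogrowth.gam p τ with hudef
  have key : ∀ k, (u k)⁻¹ - u k = τ / p k := fun k => aux13_inv_sub p hp hτ k
  have hQ : 0 < ∏ k, τ / p k := Finset.prod_pos (fun k _ => div_pos hτ (hp k))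
  set Q := ∏ k, τ / p k with hQdef
  have hprod : ∀ j : Fin n,
      (∏ k ∈ Finset.univ.erase j, ((u k)⁻¹ - u k)) = Q / τ * p j := by
    intro j
    have h := Finset.prod_erase_mul Finset.univ (fun k => τ / p k) (Finset.mem_univ j)
    have h2 : (∏ k ∈ Finset.univ.erase j, ((u k)⁻¹ - u k))
        = ∏ k ∈ Finset.univ.erase j, (τ / p k) :=
      Finset.prod_congr rfl (fun k _ => key k)
    rw [h2]
    have hne : τ / p j ≠ 0 := (div_pos hτ (hp j)).ne'
    have h3 := eq_div_of_mul_eq hne h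
    rw [h3, div_div_eq_mul_div, mul_div_right_comm]
  have hD : Cogrowth.Dfun u = Q / τ * (1 / 2) := by
    unfold Cogrowth.Dfun
    rw [Finset.sum_congr rfl (fun j _ => hprod j), ← Finset.mul_sum, hpsum]
  have hN : (∑ j, (1 - u j) * ∏ k ∈ Finset.univ.erase j, ((u k)⁻¹ - u k))
      = Q / τ * (1 / 2 - ∑ j, u j * p j) := by
    rw [Finset.sum_congr rfl (fun j _ => by rw [hprod j] :
      ∀ j ∈ Finset.univ, (1 - u j) * ∏ k ∈ Finset.univ.erase j, ((u k)⁻¹ - u k)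
        = (1 - u j) * (Q / τ * p j))]
    have : ∀ j ∈ (Finset.univ : Finset (Fin n)),
        (1 - u j) * (Q / τ * p j) = Q / τ * p j - Q / τ * (u j * p j) := by
      intro j _; ring
    rw [Finset.sum_congr rfl this, Finset.sum_sub_distrib, ← Finset.mul_sum, ← Finset.mul_sum,
      hpsum]
    ring
  have hP : (∏ l, ((u l)⁻¹ - u l)) = Q := Finset.prod_congr rfl (fun l _ => key l)
  unfold Cogrowth.lamfun
  rw [hD, hN, hP]
  field_simp

end AuxStatement13

/-- properties of `Λ_p(τ) = 1 - Σ √(τ² + 4 p_i²) + (n-1) τ`. -/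
theorem statement13 (n : ℕ) (hn : 2 ≤ n) (p : Fin n → ℝ) (hp : ∀ i, 0 < p i)
    (hpsum : ∑ i, p i = 1 / 2) (Λ : ℝ → ℝ)
    (hΛ : ∀ τ : ℝ, Λ τ = 1 - (∑ i, Real.sqrt (τ ^ 2 + 4 * p i ^ 2)) + (n - 1) * τ) :
    (∀ τ : ℝ, 0 < τ → Cogrowth.lamfun (Cogrowth.gam p τ) = Λ τ) ∧
    (∀ τ : ℝ, 0 < τ →
      deriv Λ τ = -(∑ i, τ / Real.sqrt (τ ^ 2 + 4 * p i ^ 2)) + (n - 1)) ∧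
    ∃ τ0 : ℝ, 0 < τ0 ∧ deriv Λ τ0 = 0 ∧
      (∀ τ : ℝ, 0 < τ → deriv Λ τ = 0 → τ = τ0) ∧
      (∀ τ : ℝ, 0 < τ → τ ≠ τ0 → Λ τ < Λ τ0) ∧ 0 < Λ τ0 := by
  have hn2 : (2 : ℝ) ≤ (n : ℝ) := by exact_mod_cast hn
  haveI : Nonempty (Fin n) := ⟨⟨0, by omega⟩⟩
  -- Part 1
  have part1 : ∀ τ : ℝ, 0 < τ → Cogrowth.lamfun (Cogrowth.gam p τ) = Λ τ := by
    intro τ hτ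
    rw [aux13_lamfun p hp hpsum hτ, hΛ τ]
    have hs : ∑ i, Real.sqrt (τ ^ 2 + 4 * p i ^ 2)
        = 2 * (∑ i, Cogrowth.gam p τ i * p i) + n * τ := by
      rw [Finset.sum_congr rfl (fun i _ => aux13_sqrt p hp hτ i), Finset.sum_add_distrib,
        Finset.sum_const, Finset.card_univ, Fintype.card_fin, ← Finset.mul_sum,
        nsmul_eq_mul]
    rw [hs]
    ring
  -- derivative everywhere
  have hderiv : ∀ τ : ℝ, HasDerivAt Λ
      (((n : ℝ) - 1) - ∑ i, τ / Real.sqrt (τ ^ 2 + 4 * p i ^ 2)) τ := by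
    intro τ
    have hΛfun : Λ = fun t => 1 - (∑ i, Real.sqrt (t ^ 2 + 4 * p i ^ 2)) + ((n : ℝ) - 1) * t :=
      funext hΛ
    rw [hΛfun]
    have hS : HasDerivAt (fun t : ℝ => ∑ i, Real.sqrt (t ^ 2 + 4 * p i ^ 2))
        (∑ i, τ / Real.sqrt (τ ^ 2 + 4 * p i ^ 2)) τ :=
      HasDerivAt.fun_sum (fun i _ => aux13_hasDeriv (4 * p i ^ 2) τ (by have := hp i; positivity))
    have h := ((hasDerivAt_const τ (1 : ℝ)).sub hS).add ((hasDerivAt_id τ).const_mul ((n : ℝ) - 1))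
    exact h.congr_deriv (by ring)
  have hderivΛ : ∀ τ : ℝ, deriv Λ τ
      = ((n : ℝ) - 1) - ∑ i, τ / Real.sqrt (τ ^ 2 + 4 * p i ^ 2) := fun τ => (hderiv τ).deriv
  -- the function F
  set F : ℝ → ℝ := fun τ => ∑ i, τ / Real.sqrt (τ ^ 2 + 4 * p i ^ 2) with hFdef
  have hF0 : F 0 = 0 := by simp [hFdef]
  have hFmono : StrictMonoOn F (Set.Ici 0) := by
    intro a ha b hb hab
    exact Finset.sum_lt_sum_of_nonempty Finset.univ_nonempty
      (fun i _ => aux13_mono (4 * p i ^ 2) (by have := hp i; positivity) ha hb hab)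
  have hFcont : Continuous F := by
    apply continuous_finset_sum
    intro i _
    exact continuous_id.div (Real.continuous_sqrt.comp ((continuous_pow 2).add continuous_const))
      (fun x => (Real.sqrt_pos.mpr (by have := hp i; positivity)).ne')
  have hple : ∀ i, p i ≤ 1 / 2 := by
    intro i
    rw [← hpsum]
    exact Finset.single_le_sum (fun j _ => (hp j).le) (Finset.mem_univ i)
  have hFn : (n : ℝ) - 1 ≤ F n := by
    have hs1 : Real.sqrt ((n : ℝ) ^ 2 + 1) ≤ (n : ℝ) + 1 := by
      rw [show ((n : ℝ) + 1) = Real.sqrt (((n : ℝ) + 1) ^ 2) from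
        (Real.sqrt_sq (by positivity)).symm]
      exact Real.sqrt_le_sqrt (by nlinarith)
    have hspos : 0 < Real.sqrt ((n : ℝ) ^ 2 + 1) := Real.sqrt_pos.mpr (by positivity)
    have hterm : ∀ i : Fin n, (n : ℝ) / Real.sqrt ((n : ℝ) ^ 2 + 1)
        ≤ (n : ℝ) / Real.sqrt ((n : ℝ) ^ 2 + 4 * p i ^ 2) := by
      intro i
      have h4 : 4 * p i ^ 2 ≤ 1 := by nlinarith [hple i, (hp i).le]
      have hsp : 0 < Real.sqrt ((n : ℝ) ^ 2 + 4 * p i ^ 2) :=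
        Real.sqrt_pos.mpr (by positivity)
      exact div_le_div_of_nonneg_left (by positivity) hsp (Real.sqrt_le_sqrt (by linarith))
    calc (n : ℝ) - 1 ≤ (n : ℝ) * ((n : ℝ) / Real.sqrt ((n : ℝ) ^ 2 + 1)) := by
          rw [mul_div_assoc', le_div_iff₀ hspos]
          nlinarith [hs1, Real.sqrt_nonneg ((n : ℝ) ^ 2 + 1)]
      _ = ∑ _i : Fin n, (n : ℝ) / Real.sqrt ((n : ℝ) ^ 2 + 1) := by
          rw [Finset.sum_const, Finset.card_univ, Fintype.card_fin, nsmul_eq_mul]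
      _ ≤ F n := Finset.sum_le_sum (fun i _ => hterm i)
  -- existence of τ0
  obtain ⟨τ0, hτ0mem, hFτ0⟩ := intermediate_value_Icc (show (0:ℝ) ≤ (n:ℝ) by positivity)
    hFcont.continuousOn (by rw [hF0]; exact ⟨by linarith, hFn⟩ :
      (n : ℝ) - 1 ∈ Set.Icc (F 0) (F (n : ℝ)))
  have hτ0nn : 0 ≤ τ0 := hτ0mem.1
  have hτ0pos : 0 < τ0 := by
    rcases hτ0nn.lt_or_eq with h | h
    · exact h
    · exfalso; rw [← h, hF0] at hFτ0; linarith
  -- continuity / differentiability of Λ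
  have hcont : Continuous Λ := Differentiable.continuous (fun τ => (hderiv τ).differentiableAt)
  have hderivF : ∀ τ : ℝ, deriv Λ τ = ((n : ℝ) - 1) - F τ := hderivΛ
  have hmonoΛ : StrictMonoOn Λ (Set.Icc 0 τ0) := by
    apply strictMonoOn_of_deriv_pos (convex_Icc 0 τ0) hcont.continuousOn
    intro x hx
    rw [interior_Icc] at hx
    rw [hderivF]
    have : F x < F τ0 := hFmono (Set.mem_Ici.mpr hx.1.le) (Set.mem_Ici.mpr hτ0nn) hx.2
    linarith [hFτ0]
  have hantiΛ : StrictAntiOn Λ (Set.Ici τ0) := by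
    apply strictAntiOn_of_deriv_neg (convex_Ici τ0) hcont.continuousOn
    intro x hx
    rw [interior_Ici] at hx
    rw [hderivF]
    have : F τ0 < F x := hFmono (Set.mem_Ici.mpr hτ0nn)
      (Set.mem_Ici.mpr (hτ0nn.trans hx.le)) hx
    linarith [hFτ0]
  have hΛ0 : Λ 0 = 0 := by
    rw [hΛ 0]
    have : ∀ i ∈ (Finset.univ : Finset (Fin n)),
        Real.sqrt ((0:ℝ) ^ 2 + 4 * p i ^ 2) = 2 * p i := by
      intro i _
      rw [show (0:ℝ) ^ 2 + 4 * p i ^ 2 = (2 * p i) ^ 2 by ring,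
        Real.sqrt_sq (by linarith [hp i])]
    rw [Finset.sum_congr rfl this, ← Finset.mul_sum, hpsum]
    ring
  refine ⟨part1, fun τ _ => by rw [hderivF]; ring, τ0, hτ0pos, ?_, ?_, ?_, ?_⟩
  · rw [hderivF, hFτ0]; ring
  · intro τ hτ h0
    rw [hderivF] at h0
    have hFτ : F τ = F τ0 := by rw [hFτ0]; linarith
    exact hFmono.injOn (Set.mem_Ici.mpr hτ.le) (Set.mem_Ici.mpr hτ0nn) hFτ
  · intro τ hτ hne
    rcases lt_or_gt_of_ne hne with h | h
    · exact hmonoΛ ⟨hτ.le, h.le⟩ ⟨hτ0nn, le_refl τ0⟩ h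
    · exact hantiΛ (Set.mem_Ici.mpr (le_refl τ0)) (Set.mem_Ici.mpr h.le) h
  · have := hmonoΛ ⟨le_refl 0, hτ0nn⟩ ⟨hτ0nn, le_refl τ0⟩ hτ0pos
    rw [hΛ0] at this
    exact this
end

section
/- Fix p_0 ∈ 𝒫 and let τ_0 > 0 be the unique point at which the function τ ↦ λ(γ_{p_0}(τ)) = 1 − Σ_i √(τ² + 4 p_i²) + (n−1)τ attains its maximum on (0,∞). Then there exists a unique r_0 ∈ ℛ such that H(r_0, δ(r_0)/2) = γ_{p_0}(τ_0). -/
open Filter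

open Finset

namespace Cog14

variable {n : ℕ}

/-- The no-cancellation relation on letters. -/
def nc (a b : Fin n × Bool) : Prop := ¬(a.1 = b.1 ∧ a.2 = !b.2)

instance : ∀ a b : Fin n × Bool, Decidable (nc a b) := fun _ _ => instDecidableNot

lemma reduce_eq_self : ∀ {L : List (Fin n × Bool)}, List.IsChain nc L → FreeGroup.reduce L = L
  | [], _ => rfl
  | [a], _ => rfl
  | a :: b :: L, h => by
    have h1 : nc a b := (List.isChain_cons_cons.mp h).1
    have h2 := reduce_eq_self (List.isChain_cons_cons.mp h).2
    rw [FreeGroup.reduce.cons, h2]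
    simp only [nc] at h1
    simp [h1]

lemma chain'_of_reduce : ∀ {L : List (Fin n × Bool)}, FreeGroup.reduce L = L → List.IsChain nc L
  | [], _ => List.isChain_nil
  | [a], _ => List.isChain_singleton a
  | a :: b :: L, h => by
    have hred : FreeGroup.reduce (b :: L) = b :: L := by
      have h1 : FreeGroup.Red (b :: L) (FreeGroup.reduce (b :: L)) := FreeGroup.reduce.red
      have h2 : FreeGroup.Red (a :: b :: L) (a :: FreeGroup.reduce (b :: L)) :=
        FreeGroup.Red.cons_cons h1
      rw [← h] at h2
      have := FreeGroup.reduce.min h2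
      rw [h] at this
      exact (List.cons.injEq _ _ _ _ ▸ this).2.symm
    refine List.isChain_cons_cons.mpr ⟨?_, chain'_of_reduce hred⟩
    intro hcon
    rw [FreeGroup.reduce.cons, hred] at h
    obtain ⟨e1, e2⟩ := hcon
    simp only [e1, e2, and_self, if_true] at h
    have := congrArg List.length h
    simp only [List.length_cons] at this; omega

lemma chain'_toWord (g : FreeGroup (Fin n)) : List.IsChain nc (FreeGroup.toWord g) :=
  chain'_of_reduce (FreeGroup.reduce_toWord g)

/-- All words of length at most `k`. -/
def allW (n : ℕ) : ℕ → Finset (List (Fin n × Bool))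
  | 0 => {[]}
  | k + 1 => {[]} ∪ (Finset.univ ×ˢ allW n k).image fun p => p.1 :: p.2

lemma mem_allW {k : ℕ} {L : List (Fin n × Bool)} : L ∈ allW n k ↔ L.length ≤ k := by
  induction k generalizing L with
  | zero => simp [allW, List.length_eq_zero_iff]
  | succ k ih =>
    simp only [allW, mem_union, mem_singleton, mem_image, mem_product, mem_univ, true_and]
    constructor
    · rintro (rfl | ⟨⟨a, w⟩, hw, rfl⟩)
      · simp
      · simpa using ih.mp hw
    · intro hL
      cases L with
      | nil => exact Or.inl rfl
      | cons a w => exact Or.inr ⟨⟨a, w⟩, ih.mpr (by simpa using hL), rfl⟩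

/-- Reduced words of length at most `k`. -/
def RW (n k : ℕ) : Finset (List (Fin n × Bool)) :=
  (allW n k).filter fun w => List.IsChain nc w

lemma mem_RW {k : ℕ} {L : List (Fin n × Bool)} :
    L ∈ RW n k ↔ L.length ≤ k ∧ List.IsChain nc L := by
  simp [RW, mem_allW]

/-- Reduced words of length ≤ k whose head is `a`. -/
def RWH (n k : ℕ) (a : Fin n × Bool) : Finset (List (Fin n × Bool)) :=
  (RW n k).filter fun w => w.head? = some a

/-- weight of a word -/
def wt (x : Fin n → ℝ) (L : List (Fin n × Bool)) : ℝ := (L.map fun l => x l.1).prod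

lemma wt_nil (x : Fin n → ℝ) : wt x [] = 1 := rfl

lemma wt_cons (x : Fin n → ℝ) (a : Fin n × Bool) (L : List (Fin n × Bool)) :
    wt x (a :: L) = x a.1 * wt x L := by simp [wt]

lemma wt_nonneg {x : Fin n → ℝ} (hx : ∀ i, 0 ≤ x i) (L : List (Fin n × Bool)) : 0 ≤ wt x L := by
  induction L with
  | nil => norm_num [wt_nil]
  | cons a L ih => rw [wt_cons]; exact mul_nonneg (hx a.1) ih

/-- per-head partial sums -/
noncomputable def ys (x : Fin n → ℝ) (k : ℕ) (a : Fin n × Bool) : ℝ := ∑ w ∈ RWH n k a, wt x w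

lemma pairwise_RWH (k : ℕ) (t : Finset (Fin n × Bool)) :
    (t : Set (Fin n × Bool)).PairwiseDisjoint (RWH n k) := by
  intro a _ b _ hab
  simp only [Function.onFun, Finset.disjoint_left, RWH, mem_filter]
  rintro w ⟨_, h1⟩ ⟨_, h2⟩
  rw [h1] at h2
  exact hab (Option.some.injEq _ _ ▸ h2)

lemma disj_nil (k : ℕ) (t : Finset (Fin n × Bool)) :
    Disjoint ({[]} : Finset (List (Fin n × Bool))) (t.biUnion (RWH n k)) := by
  simp only [Finset.disjoint_left, mem_singleton, mem_biUnion, RWH, mem_filter]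
  rintro w rfl ⟨a, _, _, h⟩
  simp at h

lemma RW_eq_union (k : ℕ) : RW n k = {[]} ∪ Finset.univ.biUnion (RWH n k) := by
  ext w
  simp only [mem_union, mem_singleton, mem_biUnion, mem_univ, true_and, RWH, mem_filter]
  cases w with
  | nil => simp [mem_RW]
  | cons a t =>
    constructor
    · intro hw; exact Or.inr ⟨a, hw, rfl⟩
    · rintro (h | ⟨b, hb, _⟩)
      · exact absurd h (by simp)
      · exact hb

lemma tot_eq (x : Fin n → ℝ) (k : ℕ) :
    ∑ w ∈ RW n k, wt x w = 1 + ∑ a, ys x k a := by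
  rw [RW_eq_union k, Finset.sum_union (disj_nil k _), Finset.sum_biUnion (pairwise_RWH k _)]
  simp [wt_nil, ys]

lemma filter_head_eq (k : ℕ) (a : Fin n × Bool) :
    (RW n k).filter (fun w => ∀ b ∈ w.head?, nc a b)
      = {[]} ∪ (Finset.univ.filter fun b => nc a b).biUnion (RWH n k) := by
  ext w
  simp only [mem_filter, mem_union, mem_singleton, mem_biUnion, mem_univ, true_and, RWH]
  cases w with
  | nil => simp [mem_RW]
  | cons c t =>
    simp only [List.head?_cons, Option.mem_def, Option.some.injEq, forall_eq', mem_filter,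
      List.head?_cons]
    constructor
    · rintro ⟨h1, h2⟩; exact Or.inr ⟨c, h2, h1, rfl⟩
    · rintro (h | ⟨b, hb, hw, hh⟩)
      · exact absurd h (by simp)
      · obtain rfl : c = b := by simpa using hh
        exact ⟨hw, hb⟩

lemma RWH_succ (k : ℕ) (a : Fin n × Bool) :
    RWH n (k + 1) a = ((RW n k).filter (fun w => ∀ b ∈ w.head?, nc a b)).image (a :: ·) := by
  ext w
  simp only [RWH, mem_filter, mem_image, mem_RW]
  constructor
  · rintro ⟨⟨hlen, hch⟩, hh⟩
    cases w with
    | nil => simp at hh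
    | cons c t =>
      obtain rfl : c = a := by simpa using hh
      rw [List.isChain_cons] at hch
      refine ⟨t, ⟨⟨by simpa using hlen, hch.2⟩, hch.1⟩, rfl⟩
  · rintro ⟨t, ⟨⟨hlen, hch⟩, hcomp⟩, rfl⟩
    exact ⟨⟨by simpa using hlen, List.isChain_cons.mpr ⟨hcomp, hch⟩⟩, rfl⟩

lemma ys_succ (x : Fin n → ℝ) (k : ℕ) (a : Fin n × Bool) :
    ys x (k + 1) a = x a.1 * (1 + ∑ b ∈ Finset.univ.filter fun b => nc a b, ys x k b) := by
  unfold ys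
  rw [RWH_succ, Finset.sum_image (by intro w _ v _ h; simpa using h)]
  simp_rw [wt_cons, ← Finset.mul_sum]
  congr 1
  rw [filter_head_eq, Finset.sum_union (disj_nil k _),
    Finset.sum_biUnion (pairwise_RWH k _)]
  simp [wt]

def flip1 (a : Fin n × Bool) : Fin n × Bool := (a.1, !a.2)

lemma ys_zero (x : Fin n → ℝ) (a : Fin n × Bool) : ys x 0 a = 0 := by
  unfold ys
  rw [show RWH n 0 a = ∅ from Finset.eq_empty_iff_forall_notMem.mpr ?_, Finset.sum_empty]
  intro w hw
  simp only [RWH, mem_filter, mem_RW] at hw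
  obtain ⟨⟨h1, -⟩, h3⟩ := hw
  rw [List.length_eq_zero_iff.mp (Nat.le_zero.mp h1)] at h3
  simp at h3

lemma ys_mono {x : Fin n → ℝ} (hx : ∀ i, 0 ≤ x i) (k : ℕ) (a : Fin n × Bool) :
    ys x k a ≤ ys x (k + 1) a := by
  apply Finset.sum_le_sum_of_subset_of_nonneg
  · intro w hw
    simp only [RWH, mem_filter, mem_RW] at hw ⊢
    exact ⟨⟨hw.1.1.trans (Nat.le_succ k), hw.1.2⟩, hw.2⟩
  · intro w _ _; exact wt_nonneg hx w

lemma ys_nonneg {x : Fin n → ℝ} (hx : ∀ i, 0 ≤ x i) (k : ℕ) (a : Fin n × Bool) :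
    0 ≤ ys x k a :=
  Finset.sum_nonneg fun w _ => wt_nonneg hx w

lemma ys_flip (x : Fin n → ℝ) (k : ℕ) (a : Fin n × Bool) : ys x k (flip1 a) = ys x k a := by
  unfold ys
  refine Finset.sum_bij' (fun w _ => w.map flip1) (fun w _ => w.map flip1) ?_ ?_ ?_ ?_ ?_
  · intro w hw
    simp only [RWH, mem_filter, mem_RW] at hw ⊢
    obtain ⟨⟨h1, h2⟩, h3⟩ := hw
    refine ⟨⟨by simpa using h1, ?_⟩, ?_⟩
    · rw [List.isChain_map]
      apply h2.imp
      intro a b hab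
      simp only [nc, flip1] at hab ⊢
      rintro ⟨e1, e2⟩
      exact hab ⟨e1, by simpa using e2⟩
    · cases w with
      | nil => simp at h3
      | cons c t =>
        obtain rfl : c = flip1 a := by simpa using h3
        simp [flip1]
  · intro w hw
    simp only [RWH, mem_filter, mem_RW] at hw ⊢
    obtain ⟨⟨h1, h2⟩, h3⟩ := hw
    refine ⟨⟨by simpa using h1, ?_⟩, ?_⟩
    · rw [List.isChain_map]
      apply h2.imp
      intro a b hab
      simp only [nc, flip1] at hab ⊢
      rintro ⟨e1, e2⟩
      exact hab ⟨e1, by simpa using e2⟩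
    · cases w with
      | nil => simp at h3
      | cons c t =>
        obtain rfl : c = a := by simpa using h3
        simp [flip1]
  · intro w _
    simp only [List.map_map]
    convert List.map_id w
    ext l : 1
    simp [flip1]
  · intro w _
    simp only [List.map_map]
    convert List.map_id w
    ext l : 1
    simp [flip1]
  · intro w _
    unfold wt
    rw [List.map_map]
    congr 1

lemma filter_nc_eq (a : Fin n × Bool) :
    (Finset.univ.filter fun b => nc a b) = Finset.univ.erase (flip1 a) := by
  ext b
  constructor
  · intro h
    simp only [mem_filter, nc] at h
    simp only [Finset.mem_erase, mem_univ, and_true, flip1]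
    rintro rfl
    exact (Finset.mem_filter.mp (show (a.1, !a.2) ∈ Finset.univ.filter (fun b => nc a b) from h)).2 ⟨rfl, by simp⟩
  · intro h
    simp only [Finset.mem_erase, flip1, mem_univ, and_true] at h
    simp only [mem_filter, mem_univ, true_and, nc]
    refine Finset.mem_filter.mpr ⟨mem_univ _, ?_⟩
    rintro ⟨h1, h2⟩
    exact h (Prod.ext h1.symm (by simp [h2]))

/-- `T = ∑ x i / (1 + x i)` -/
noncomputable def Tval (x : Fin n → ℝ) : ℝ := ∑ i, x i / (1 + x i)

noncomputable def Yfun (x : Fin n → ℝ) (S : ℝ) (a : Fin n × Bool) : ℝ :=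
  x a.1 / (1 + x a.1) * (1 + 2 * S)

lemma sum_Yfun (x : Fin n → ℝ) (S : ℝ) : ∑ a, Yfun x S a = 2 * Tval x * (1 + 2 * S) := by
  rw [Fintype.sum_prod_type]
  have h1 : ∀ i : Fin n, (∑ _b : Bool, Yfun x S (i, _b)) = x i / (1 + x i) * (1 + 2 * S) * 2 := by
    intro i; simp [Yfun]; ring
  rw [Finset.sum_congr rfl fun i _ => h1 i, ← Finset.sum_mul, ← Finset.sum_mul, Tval]
  ring

lemma sum_ys (x : Fin n → ℝ) (k : ℕ) (a : Fin n × Bool) :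
    (∑ b ∈ Finset.univ.filter fun b => nc a b, ys x k b)
      = (∑ b, ys x k b) - ys x k a := by
  rw [filter_nc_eq, Finset.sum_erase_eq_sub (Finset.mem_univ _), ys_flip]

theorem ys_le (x : Fin n → ℝ) (hx0 : ∀ i, 0 < x i) (hT : Tval x < 1 / 2) (k : ℕ)
    (a : Fin n × Bool) :
    ys x k a ≤ Yfun x (Tval x / (1 - 2 * Tval x)) a := by
  set S := Tval x / (1 - 2 * Tval x) with hS
  have hd : (0:ℝ) < 1 - 2 * Tval x := by linarith
  have hT0 : 0 ≤ Tval x :=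
    Finset.sum_nonneg fun i _ => div_nonneg (hx0 i).le (by have := hx0 i; linarith)
  have hS0 : 0 ≤ S := div_nonneg hT0 hd.le
  have h2S : 2 * Tval x * (1 + 2 * S) = 2 * S := by
    rw [hS]; field_simp; ring
  have hfix : ∀ b : Fin n × Bool, x b.1 * (1 + 2 * S - Yfun x S b) = Yfun x S b := by
    intro b
    have hb : (0:ℝ) < 1 + x b.1 := by have := hx0 b.1; linarith
    have hkey : Yfun x S b * (1 + x b.1) = x b.1 * (1 + 2 * S) := by
      rw [Yfun]; field_simp
    linear_combination -hkey
  induction k generalizing a with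
  | zero =>
    rw [ys_zero]
    have := hx0 a.1
    have hb : (0:ℝ) < 1 + x a.1 := by linarith
    unfold Yfun
    exact mul_nonneg (div_nonneg this.le hb.le) (by linarith)
  | succ k ih =>
    rw [ys_succ]
    calc x a.1 * (1 + ∑ b ∈ Finset.univ.filter fun b => nc a b, ys x k b)
        ≤ x a.1 * (1 + ((∑ b, Yfun x S b) - Yfun x S a)) := by
          apply mul_le_mul_of_nonneg_left _ (hx0 a.1).le
          apply add_le_add_right
          rw [filter_nc_eq]
          calc ∑ b ∈ Finset.univ.erase (flip1 a), ys x k b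
              ≤ ∑ b ∈ Finset.univ.erase (flip1 a), Yfun x S b :=
                Finset.sum_le_sum fun b _ => ih b
            _ = (∑ b, Yfun x S b) - Yfun x S (flip1 a) :=
                Finset.sum_erase_eq_sub (Finset.mem_univ _)
            _ = (∑ b, Yfun x S b) - Yfun x S a := rfl
      _ = Yfun x S a := by rw [sum_Yfun, h2S]; linear_combination hfix a

lemma sum_fst (f : Fin n → ℝ) : ∑ a : Fin n × Bool, f a.1 = 2 * ∑ i, f i := by
  rw [Fintype.sum_prod_type]
  simp only [Finset.sum_const, Finset.card_univ, Fintype.card_bool, nsmul_eq_mul,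
    Nat.cast_ofNat]
  rw [← Finset.mul_sum]

theorem sum_ys_ge (x : Fin n → ℝ) (hx0 : ∀ i, 0 < x i) (hT : 1 / 2 < Tval x) (k : ℕ) :
    (k : ℝ) * (2 * Tval x - 1) ≤ ∑ a, ys x k a := by
  have hx0' : ∀ i, 0 ≤ x i := fun i => (hx0 i).le
  induction k with
  | zero => simp [ys_zero]
  | succ k ih =>
    set Sk := ∑ a, ys x k a with hSk
    have hSk0 : 0 ≤ Sk := Finset.sum_nonneg fun a _ => ys_nonneg hx0' k a
    have hstep : ∀ a : Fin n × Bool, x a.1 / (1 + x a.1) * (1 + Sk) ≤ ys x (k + 1) a := by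
      intro a
      have hxa := hx0 a.1
      have hb : (0:ℝ) < 1 + x a.1 := by linarith
      have hrec : ys x (k + 1) a = x a.1 * (1 + (Sk - ys x k a)) := by
        rw [ys_succ, sum_ys]
      have hmono : ys x k a ≤ ys x (k + 1) a := ys_mono hx0' k a
      rw [div_mul_eq_mul_div, div_le_iff₀ hb]
      nlinarith [hrec, hmono]
    rw [Nat.cast_succ]
    calc ((k : ℝ) + 1) * (2 * Tval x - 1)
        ≤ 2 * Tval x * (1 + Sk) := by nlinarith [hSk0, ih]
      _ = ∑ a : Fin n × Bool, x a.1 / (1 + x a.1) * (1 + Sk) := by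
          rw [show (∑ a : Fin n × Bool, x a.1 / (1 + x a.1) * (1 + Sk))
              = 2 * ∑ i, x i / (1 + x i) * (1 + Sk) from sum_fst fun i => x i / (1 + x i) * (1 + Sk),
            ← Finset.sum_mul, Tval]
          ring
      _ ≤ ∑ a, ys x (k + 1) a := Finset.sum_le_sum fun a _ => hstep a


/-! ### Bridge to the free group -/

/-- length of a list of letters -/
noncomputable def llen (r : Fin n → ℝ) (L : List (Fin n × Bool)) : ℝ :=
  (L.map fun l => - Real.log (r l.1)).sum

lemma wlen_eq (r : Fin n → ℝ) (g : FreeGroup (Fin n)) :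
    Cogrowth.wlen r g = llen r (FreeGroup.toWord g) := rfl

lemma llen_nil (r : Fin n → ℝ) : llen r [] = 0 := rfl

lemma llen_cons (r : Fin n → ℝ) (a : Fin n × Bool) (L : List (Fin n × Bool)) :
    llen r (a :: L) = - Real.log (r a.1) + llen r L := by simp [llen]

lemma exp_llen (r : Fin n → ℝ) (hr0 : ∀ i, 0 < r i) (s : ℝ) (L : List (Fin n × Bool)) :
    Real.exp (-(s * llen r L)) = wt (fun i => r i ^ s) L := by
  induction L with
  | nil => simp [llen_nil, wt_nil]
  | cons a L ih =>
    rw [llen_cons, wt_cons, ← ih]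
    rw [show -(s * (- Real.log (r a.1) + llen r L))
        = Real.log (r a.1) * s + -(s * llen r L) by ring, Real.exp_add]
    congr 1
    rw [Real.rpow_def_of_pos (hr0 a.1)]

lemma le_llen (r : Fin n → ℝ) (c : ℝ) (hc : ∀ i, c ≤ - Real.log (r i)) (L : List (Fin n × Bool)) :
    c * L.length ≤ llen r L := by
  induction L with
  | nil => simp [llen_nil]
  | cons a L ih =>
    rw [llen_cons, List.length_cons]
    push_cast
    calc c * ((L.length : ℝ) + 1) = c + c * L.length := by ring
      _ ≤ - Real.log (r a.1) + llen r L := add_le_add (hc a.1) ih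

lemma llen_le (r : Fin n → ℝ) (c : ℝ) (hc : ∀ i, - Real.log (r i) ≤ c) (L : List (Fin n × Bool)) :
    llen r L ≤ c * L.length := by
  induction L with
  | nil => simp [llen_nil]
  | cons a L ih =>
    rw [llen_cons, List.length_cons]
    push_cast
    calc - Real.log (r a.1) + llen r L ≤ c + c * L.length := add_le_add (hc a.1) ih
      _ = c * ((L.length : ℝ) + 1) := by ring

lemma exists_mmin (hn : 0 < n) (r : Fin n → ℝ) (hr0 : ∀ i, 0 < r i) (hr1 : ∀ i, r i < 1) :
    ∃ c : ℝ, 0 < c ∧ ∀ i, c ≤ - Real.log (r i) := by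
  obtain ⟨i0, -, hi0⟩ := Finset.exists_min_image Finset.univ (fun i => - Real.log (r i))
    ⟨⟨0, hn⟩, Finset.mem_univ _⟩
  exact ⟨- Real.log (r i0), by simpa using Real.log_neg (hr0 i0) (hr1 i0),
    fun i => hi0 i (Finset.mem_univ i)⟩

lemma exists_mmax (hn : 0 < n) (r : Fin n → ℝ) :
    ∃ c : ℝ, ∀ i, - Real.log (r i) ≤ c := by
  obtain ⟨i0, -, hi0⟩ := Finset.exists_max_image Finset.univ (fun i => - Real.log (r i))
    ⟨⟨0, hn⟩, Finset.mem_univ _⟩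
  exact ⟨- Real.log (r i0), fun i => hi0 i (Finset.mem_univ i)⟩

/-- The counting set. -/
def SetN (r : Fin n → ℝ) (R : ℝ) : Set (FreeGroup (Fin n)) := {g | Cogrowth.wlen r g ≤ R}

lemma SetN_mono (r : Fin n → ℝ) {R R' : ℝ} (h : R ≤ R') : SetN r R ⊆ SetN r R' :=
  fun g hg => le_trans hg h

lemma toWord_mem_RW {r : Fin n → ℝ} {c : ℝ} (hcpos : 0 < c) (hc : ∀ i, c ≤ - Real.log (r i))
    {R : ℝ} {g : FreeGroup (Fin n)} (hg : g ∈ SetN r R) :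
    FreeGroup.toWord g ∈ RW n ⌈R / c⌉₊ := by
  rw [mem_RW]
  refine ⟨?_, chain'_toWord g⟩
  have h1 : c * (FreeGroup.toWord g).length ≤ R :=
    le_trans (le_llen r c hc _) (by rw [← wlen_eq]; exact hg)
  have h2 : ((FreeGroup.toWord g).length : ℝ) ≤ R / c := by
    rw [le_div_iff₀ hcpos]; linarith [h1]
  exact_mod_cast h2.trans (Nat.le_ceil _)

lemma finite_SetN (hn : 0 < n) (r : Fin n → ℝ) (hr0 : ∀ i, 0 < r i) (hr1 : ∀ i, r i < 1)
    (R : ℝ) : (SetN r R).Finite := by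
  obtain ⟨c, hcpos, hc⟩ := exists_mmin hn r hr0 hr1
  apply Set.Finite.subset (Set.Finite.preimage
    (Set.injOn_of_injective FreeGroup.toWord_injective) (RW n ⌈R / c⌉₊).finite_toSet)
  intro g hg
  exact toWord_mem_RW hcpos hc hg


lemma one_mem_SetN (r : Fin n → ℝ) {R : ℝ} (hR : 0 ≤ R) : (1 : FreeGroup (Fin n)) ∈ SetN r R := by
  show Cogrowth.wlen r 1 ≤ R
  rw [wlen_eq, FreeGroup.toWord_one, llen_nil]
  exact hR

lemma one_le_Ncard (hn : 0 < n) (r : Fin n → ℝ) (hr0 : ∀ i, 0 < r i) (hr1 : ∀ i, r i < 1)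
    {R : ℝ} (hR : 0 ≤ R) : 1 ≤ Nat.card (SetN r R) := by
  have hfin := finite_SetN hn r hr0 hr1 R
  rw [Nat.card_coe_set_eq, Set.ncard_eq_toFinset_card _ hfin]
  exact Finset.card_pos.mpr ⟨1, hfin.mem_toFinset.mpr (one_mem_SetN r hR)⟩

/-- The main upper estimate. -/
theorem Ncard_mul_le (hn : 0 < n) (r : Fin n → ℝ) (hr0 : ∀ i, 0 < r i) (hr1 : ∀ i, r i < 1)
    {s : ℝ} (hs : 0 < s) (hT : Tval (fun i => r i ^ s) < 1 / 2) (R : ℝ) :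
    (Nat.card (SetN r R) : ℝ) * Real.exp (-(s * R))
      ≤ 1 + 2 * (Tval (fun i => r i ^ s) / (1 - 2 * Tval (fun i => r i ^ s))) := by
  obtain ⟨c, hcpos, hc⟩ := exists_mmin hn r hr0 hr1
  set x : Fin n → ℝ := fun i => r i ^ s with hx
  have hx0 : ∀ i, 0 < x i := fun i => Real.rpow_pos_of_pos (hr0 i) s
  set S := Tval x / (1 - 2 * Tval x) with hS
  have hfin := finite_SetN hn r hr0 hr1 R
  rw [Nat.card_coe_set_eq, Set.ncard_eq_toFinset_card _ hfin]
  set F := hfin.toFinset with hF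
  set k0 := ⌈R / c⌉₊ with hk0
  calc (F.card : ℝ) * Real.exp (-(s * R))
      = ∑ _g ∈ F, Real.exp (-(s * R)) := by rw [Finset.sum_const, nsmul_eq_mul]
    _ ≤ ∑ g ∈ F, Real.exp (-(s * Cogrowth.wlen r g)) := by
        apply Finset.sum_le_sum
        intro g hg
        apply Real.exp_le_exp.mpr
        have : Cogrowth.wlen r g ≤ R := hfin.mem_toFinset.mp hg
        nlinarith [this, hs, mul_nonneg hs.le (sub_nonneg.mpr this)]
    _ = ∑ g ∈ F, wt x (FreeGroup.toWord g) := by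
        apply Finset.sum_congr rfl
        intro g _
        rw [wlen_eq, exp_llen r hr0 s]
    _ = ∑ w ∈ F.image FreeGroup.toWord, wt x w := by
        rw [Finset.sum_image (fun g _ h _ hgh => FreeGroup.toWord_injective hgh)]
    _ ≤ ∑ w ∈ RW n k0, wt x w := by
        apply Finset.sum_le_sum_of_subset_of_nonneg
        · intro w hw
          obtain ⟨g, hg, rfl⟩ := Finset.mem_image.mp hw
          exact toWord_mem_RW hcpos hc (hfin.mem_toFinset.mp hg)
        · intro w _ _
          exact wt_nonneg (fun i => (hx0 i).le) w
    _ = 1 + ∑ a, ys x k0 a := tot_eq x k0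
    _ ≤ 1 + ∑ a, Yfun x S a := by
        apply add_le_add_right
        exact Finset.sum_le_sum fun a _ => ys_le x hx0 hT k0 a
    _ = 1 + 2 * S := by
        rw [sum_Yfun]
        have hd : (0:ℝ) < 1 - 2 * Tval x := by linarith
        have : 2 * Tval x * (1 + 2 * S) = 2 * S := by rw [hS]; field_simp; ring
        rw [this]


lemma geom_le {q : ℝ} (h0 : 0 ≤ q) (h1 : q < 1) (m : ℕ) :
    ∑ j ∈ Finset.range m, q ^ j ≤ 1 / (1 - q) := by
  have h2 : (0:ℝ) < 1 - q := by linarith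
  have h3 : ∑ j ∈ Finset.range m, q ^ j = (1 - q ^ m) / (1 - q) := by
    rw [geom_sum_eq (by linarith : q ≠ 1)]
    rw [div_eq_div_iff (by linarith) (by linarith)]
    ring
  rw [h3]
  gcongr
  nlinarith [pow_nonneg h0 m]

lemma mk_mem_SetN {r : Fin n → ℝ} {w : List (Fin n × Bool)} (hch : List.IsChain nc w) {R : ℝ}
    (h : llen r w ≤ R) : FreeGroup.mk w ∈ SetN r R := by
  show Cogrowth.wlen r (FreeGroup.mk w) ≤ R
  rw [wlen_eq, FreeGroup.toWord_mk, reduce_eq_self hch]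
  exact h

/-- The main lower estimate: if the counting function is dominated by `exp (s' R)` then the
partial sums of the Poincaré series at any exponent `s > s'` are bounded. -/
theorem tot_bounded (hn : 0 < n) (r : Fin n → ℝ) (hr0 : ∀ i, 0 < r i) (hr1 : ∀ i, r i < 1)
    {s s' R1 : ℝ} (hs' : 0 < s') (hss : s' < s) (hR1 : 1 ≤ R1)
    (hN : ∀ R : ℝ, R1 ≤ R → (Nat.card (SetN r R) : ℝ) ≤ Real.exp (s' * R)) (k : ℕ) :
    ∑ w ∈ RW n k, wt (fun i => r i ^ s) w ≤
      Real.exp (s' * R1) * (1 / (1 - Real.exp (-s)))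
        + Real.exp s' * (1 / (1 - Real.exp (s' - s))) := by
  have hs : 0 < s := hs'.trans hss
  set x : Fin n → ℝ := fun i => r i ^ s with hx
  have hlog : ∀ i, 0 < - Real.log (r i) := fun i => by
    simpa using Real.log_neg (hr0 i) (hr1 i)
  have hll0 : ∀ w : List (Fin n × Bool), 0 ≤ llen r w := by
    intro w
    have := le_llen r 0 (fun i => (hlog i).le) w
    simpa using this
  obtain ⟨cM, hcM⟩ := exists_mmax hn r
  set J := ⌈(k : ℝ) * cM⌉₊ with hJ
  have hmaps : ∀ w ∈ RW n k, ⌊llen r w⌋₊ ∈ Finset.range (J + 1) := by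
    intro w hw
    rw [Finset.mem_range, Nat.lt_succ_iff]
    have h1 : llen r w ≤ cM * w.length := llen_le r cM hcM w
    have h2 : (w.length : ℝ) ≤ k := by exact_mod_cast (mem_RW.mp hw).1
    have hcM0 : 0 ≤ cM := le_trans (hlog ⟨0, hn⟩).le (hcM _)
    have h3 : llen r w ≤ (k : ℝ) * cM := by nlinarith
    calc ⌊llen r w⌋₊ ≤ ⌊(k : ℝ) * cM⌋₊ := Nat.floor_le_floor h3
      _ ≤ J := Nat.floor_le_ceil _
  rw [← Finset.sum_fiberwise_of_maps_to hmaps]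
  have hfiber : ∀ j ∈ Finset.range (J + 1),
      ∑ w ∈ (RW n k).filter (fun w => ⌊llen r w⌋₊ = j), wt x w ≤
        (Real.exp (s' * R1) + Real.exp (s' * (j + 1))) * Real.exp (-(s * j)) := by
    intro j _
    set Fj := (RW n k).filter (fun w => ⌊llen r w⌋₊ = j) with hFj
    have hwt : ∀ w ∈ Fj, wt x w ≤ Real.exp (-(s * j)) := by
      intro w hw
      rw [← exp_llen r hr0 s w]
      apply Real.exp_le_exp.mpr
      have hj : (j : ℝ) ≤ llen r w := by
        rw [← (Finset.mem_filter.mp hw).2]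
        exact Nat.floor_le (hll0 w)
      nlinarith [mul_nonneg hs.le (sub_nonneg.mpr hj)]
    have hcard : (Fj.card : ℝ) ≤ Real.exp (s' * R1) + Real.exp (s' * (j + 1)) := by
      have hfin := finite_SetN hn r hr0 hr1 ((j : ℝ) + 1)
      have hinj : ∀ w ∈ Fj, FreeGroup.mk w ∈ hfin.toFinset := by
        intro w hw
        rw [Set.Finite.mem_toFinset]
        obtain ⟨hmem, hfl⟩ := Finset.mem_filter.mp hw
        apply mk_mem_SetN (mem_RW.mp hmem).2
        have := Nat.lt_floor_add_one (llen r w)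
        rw [hfl] at this
        exact this.le
      have hcard1 : Fj.card ≤ hfin.toFinset.card := by
        apply Finset.card_le_card_of_injOn _ hinj
        intro w hw v hv hmk
        have := congrArg FreeGroup.toWord hmk
        rw [FreeGroup.toWord_mk, FreeGroup.toWord_mk,
          reduce_eq_self (mem_RW.mp (Finset.mem_filter.mp hw).1).2,
          reduce_eq_self (mem_RW.mp (Finset.mem_filter.mp hv).1).2] at this
        exact this
      have hcard2 : (Nat.card (SetN r ((j : ℝ) + 1)) : ℝ)
          ≤ Real.exp (s' * R1) + Real.exp (s' * (j + 1)) := by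
        rcases le_or_gt R1 ((j : ℝ) + 1) with h | h
        · calc (Nat.card (SetN r ((j : ℝ) + 1)) : ℝ) ≤ Real.exp (s' * (j + 1)) := hN _ h
            _ ≤ _ := le_add_of_nonneg_left (Real.exp_pos _).le
        · have hsub : SetN r ((j : ℝ) + 1) ⊆ SetN r R1 := SetN_mono r h.le
          have := Nat.card_mono (finite_SetN hn r hr0 hr1 R1) hsub
          calc (Nat.card (SetN r ((j : ℝ) + 1)) : ℝ)
              ≤ (Nat.card (SetN r R1) : ℝ) := by exact_mod_cast this
            _ ≤ Real.exp (s' * R1) := hN R1 le_rfl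
            _ ≤ _ := le_add_of_nonneg_right (Real.exp_pos _).le
      calc (Fj.card : ℝ)
          ≤ (hfin.toFinset.card : ℝ) := by exact_mod_cast hcard1
        _ = (Nat.card (SetN r ((j : ℝ) + 1)) : ℝ) := by
            rw [Nat.card_coe_set_eq, Set.ncard_eq_toFinset_card _ hfin]
        _ ≤ _ := hcard2
    calc ∑ w ∈ Fj, wt x w ≤ ∑ _w ∈ Fj, Real.exp (-(s * j)) := Finset.sum_le_sum hwt
      _ = (Fj.card : ℝ) * Real.exp (-(s * j)) := by rw [Finset.sum_const, nsmul_eq_mul]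
      _ ≤ (Real.exp (s' * R1) + Real.exp (s' * (j + 1))) * Real.exp (-(s * j)) := by
          apply mul_le_mul_of_nonneg_right hcard (Real.exp_pos _).le
  calc ∑ j ∈ Finset.range (J + 1), ∑ w ∈ (RW n k).filter (fun w => ⌊llen r w⌋₊ = j), wt x w
      ≤ ∑ j ∈ Finset.range (J + 1),
          (Real.exp (s' * R1) + Real.exp (s' * (j + 1))) * Real.exp (-(s * j)) :=
        Finset.sum_le_sum hfiber
    _ = Real.exp (s' * R1) * ∑ j ∈ Finset.range (J + 1), Real.exp (-s) ^ j
          + Real.exp s' * ∑ j ∈ Finset.range (J + 1), Real.exp (s' - s) ^ j := by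
        rw [Finset.mul_sum, Finset.mul_sum, ← Finset.sum_add_distrib]
        apply Finset.sum_congr rfl
        intro j _
        rw [← Real.exp_nat_mul, ← Real.exp_nat_mul, add_mul, ← Real.exp_add, ← Real.exp_add]
        congr 1 <;> (rw [← Real.exp_add]; congr 1; ring)
    _ ≤ _ := by
        have h1 : Real.exp (-s) < 1 := Real.exp_lt_one_iff.mpr (by linarith)
        have h2 : Real.exp (s' - s) < 1 := Real.exp_lt_one_iff.mpr (by linarith)
        have g1 := geom_le (Real.exp_pos (-s)).le h1 (J + 1)
        have g2 := geom_le (Real.exp_pos (s' - s)).le h2 (J + 1)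
        have e1 := (Real.exp_pos (s' * R1)).le
        have e2 := (Real.exp_pos s').le
        apply add_le_add
        · exact mul_le_mul_of_nonneg_left g1 e1
        · exact mul_le_mul_of_nonneg_left g2 e2


lemma Tval_strict_anti (hn : 0 < n) (r : Fin n → ℝ) (hr0 : ∀ i, 0 < r i) (hr1 : ∀ i, r i < 1)
    {s t : ℝ} (hst : s < t) :
    Tval (fun i => r i ^ t) < Tval (fun i => r i ^ s) := by
  have : Nonempty (Fin n) := ⟨⟨0, hn⟩⟩
  apply Finset.sum_lt_sum_of_nonempty Finset.univ_nonempty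
  intro i _
  have h1 : r i ^ t < r i ^ s := Real.rpow_lt_rpow_of_exponent_gt (hr0 i) (hr1 i) hst
  have h2 : 0 < r i ^ t := Real.rpow_pos_of_pos (hr0 i) t
  rw [div_lt_div_iff₀ (by linarith) (by linarith)]
  nlinarith

lemma Tval_nonneg (r : Fin n → ℝ) (hr0 : ∀ i, 0 < r i) (s : ℝ) :
    0 ≤ Tval (fun i => r i ^ s) := by
  apply Finset.sum_nonneg
  intro i _
  have := Real.rpow_pos_of_pos (hr0 i) s
  positivity

lemma Ncard_subtype (r : Fin n → ℝ) (R : ℝ) :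
    Nat.card {g : FreeGroup (Fin n) //
        g ∈ (⊤ : Subgroup (FreeGroup (Fin n))) ∧ Cogrowth.wlen r g ≤ R}
      = Nat.card (SetN r R) :=
  Nat.card_congr (Equiv.subtypeEquivRight fun g => by simp [SetN, Set.mem_setOf_eq])

/-- The characterization of the Poincaré exponent. -/
theorem delta_eq (hn : 0 < n) (r : Fin n → ℝ) (hr0 : ∀ i, 0 < r i) (hr1 : ∀ i, r i < 1)
    {σ : ℝ} (hσ : 0 < σ) (hT : Tval (fun i => r i ^ σ) = 1 / 2) :
    Cogrowth.delta r = σ := by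
  set f : ℝ → ℝ := fun R =>
    Real.log (Nat.card {g : FreeGroup (Fin n) //
      g ∈ (⊤ : Subgroup (FreeGroup (Fin n))) ∧ Cogrowth.wlen r g ≤ R}) / R with hf
  have hdelta : Cogrowth.delta r = limsup f atTop := rfl
  -- basic positivity of the counting function
  have hN1 : ∀ R : ℝ, 0 ≤ R → 1 ≤ Nat.card (SetN r R) := fun R hR =>
    one_le_Ncard hn r hr0 hr1 hR
  have hf0 : ∀ R : ℝ, 1 ≤ R → 0 ≤ f R := by
    intro R hR
    apply div_nonneg _ (by linarith)
    rw [Ncard_subtype]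
    apply Real.log_nonneg
    exact_mod_cast hN1 R (by linarith)
  -- upper bound machinery
  have hupper : ∀ t : ℝ, σ < t → ∃ C : ℝ, 1 ≤ C ∧ ∀ R : ℝ, 1 ≤ R → f R ≤ t + Real.log C / R := by
    intro t ht
    have hTt : Tval (fun i => r i ^ t) < 1 / 2 := by
      rw [← hT]; exact Tval_strict_anti hn r hr0 hr1 ht
    set Tv := Tval (fun i => r i ^ t) with hTv
    have hTv0 : 0 ≤ Tv := Tval_nonneg r hr0 t
    set C := 1 + 2 * (Tv / (1 - 2 * Tv)) with hC
    have hC1 : 1 ≤ C := by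
      have : 0 ≤ Tv / (1 - 2 * Tv) := div_nonneg hTv0 (by linarith)
      rw [hC]; linarith
    refine ⟨C, hC1, ?_⟩
    intro R hR
    have hbound := Ncard_mul_le hn r hr0 hr1 (by linarith : (0:ℝ) < t) hTt R
    rw [← Ncard_subtype r R] at hbound
    set N := Nat.card {g : FreeGroup (Fin n) //
      g ∈ (⊤ : Subgroup (FreeGroup (Fin n))) ∧ Cogrowth.wlen r g ≤ R} with hNdef
    have hNpos : (1:ℝ) ≤ (N : ℝ) := by
      rw [hNdef, Ncard_subtype]
      exact_mod_cast hN1 R (by linarith)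
    have hNle : (N : ℝ) ≤ C * Real.exp (t * R) := by
      have hexp : (0:ℝ) < Real.exp (-(t * R)) := Real.exp_pos _
      rw [← hC] at hbound
      calc (N : ℝ) = (N : ℝ) * Real.exp (-(t * R)) * Real.exp (t * R) := by
            rw [mul_assoc, ← Real.exp_add]; simp
        _ ≤ C * Real.exp (t * R) :=
            mul_le_mul_of_nonneg_right hbound (Real.exp_pos _).le
    have hlog : Real.log (N : ℝ) ≤ Real.log C + t * R := by
      calc Real.log (N : ℝ) ≤ Real.log (C * Real.exp (t * R)) :=
            Real.log_le_log (by linarith) hNle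
        _ = Real.log C + t * R := by rw [Real.log_mul (by linarith) (Real.exp_ne_zero _),
            Real.log_exp]
    show Real.log (N : ℝ) / R ≤ t + Real.log C / R
    rw [div_le_iff₀ (by linarith : (0:ℝ) < R)]
    have hlogC : 0 ≤ Real.log C := Real.log_nonneg hC1
    calc Real.log (N:ℝ) ≤ Real.log C + t * R := hlog
      _ = (t + Real.log C / R) * R := by field_simp; ring
  -- boundedness of f
  have hbddf : IsBoundedUnder (· ≤ ·) atTop f := by
    obtain ⟨C, hC1, hC⟩ := hupper (σ + 1) (by linarith)
    refine ⟨σ + 1 + Real.log C, ?_⟩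
    rw [eventually_map]
    filter_upwards [eventually_ge_atTop (1:ℝ)] with R hR
    have := hC R hR
    have h2 : Real.log C / R ≤ Real.log C := by
      rw [div_le_iff₀ (by linarith : (0:ℝ) < R)]
      nlinarith [Real.log_nonneg hC1]
    linarith
  have hcobf : IsCoboundedUnder (· ≤ ·) atTop f := by
    apply isCoboundedUnder_le_of_eventually_le atTop (x := 0)
    filter_upwards [eventually_ge_atTop (1:ℝ)] with R hR
    exact hf0 R hR
  rw [hdelta]
  apply le_antisymm
  · -- limsup ≤ σ
    by_contra hcon
    push_neg at hcon
    set t := (σ + limsup f atTop) / 2 with htdef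
    have ht1 : σ < t := by rw [htdef]; linarith
    have ht2 : t < limsup f atTop := by rw [htdef]; linarith
    obtain ⟨C, hC1, hC⟩ := hupper t ht1
    have : limsup f atTop ≤ t := by
      have hg : Tendsto (fun R : ℝ => t + Real.log C / R) atTop (nhds t) := by
        have : Tendsto (fun R : ℝ => Real.log C / R) atTop (nhds 0) :=
          tendsto_const_nhds.div_atTop tendsto_id
        simpa using tendsto_const_nhds.add this
      calc limsup f atTop ≤ limsup (fun R : ℝ => t + Real.log C / R) atTop := by
            apply limsup_le_limsup _ hcobf hg.isBoundedUnder_le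
            filter_upwards [eventually_ge_atTop (1:ℝ)] with R hR
            exact hC R hR
        _ = t := hg.limsup_eq
    linarith
  · -- σ ≤ limsup
    have hlower : ∀ t : ℝ, 0 < t → t < σ → t ≤ limsup f atTop := by
      intro t ht0 htσ
      by_contra hcon
      push_neg at hcon
      have hev := eventually_lt_of_limsup_lt hcon hbddf
      obtain ⟨R1', hR1'⟩ := (eventually_atTop).mp hev
      set R1 := max R1' 1 with hR1def
      have hR1ge1 : (1:ℝ) ≤ R1 := le_max_right _ _
      set s := (t + σ) / 2 with hsdef
      have hts : t < s := by rw [hsdef]; linarith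
      have hsσ : s < σ := by rw [hsdef]; linarith
      have hTs : 1 / 2 < Tval (fun i => r i ^ s) := by
        rw [← hT]; exact Tval_strict_anti hn r hr0 hr1 hsσ
      have hNle : ∀ R : ℝ, R1 ≤ R → (Nat.card (SetN r R) : ℝ) ≤ Real.exp (t * R) := by
        intro R hR
        have hRge1 : (1:ℝ) ≤ R := le_trans hR1ge1 hR
        have hfR : f R < t := hR1' R (le_trans (le_max_left _ _) hR)
        have hNpos : (0:ℝ) < (Nat.card (SetN r R) : ℝ) := by
          exact_mod_cast hN1 R (by linarith)
        have hlog : Real.log (Nat.card (SetN r R) : ℝ) < t * R := by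
          have : Real.log (Nat.card (SetN r R) : ℝ) / R < t := by
            rw [hf] at hfR
            simpa only [Ncard_subtype] using hfR
          calc Real.log (Nat.card (SetN r R) : ℝ)
              = Real.log (Nat.card (SetN r R) : ℝ) / R * R := by
                field_simp
            _ < t * R := by
                apply mul_lt_mul_of_pos_right this (by linarith)
        calc (Nat.card (SetN r R) : ℝ) = Real.exp (Real.log (Nat.card (SetN r R) : ℝ)) :=
              (Real.exp_log hNpos).symm
          _ ≤ Real.exp (t * R) := Real.exp_le_exp.mpr hlog.le
      -- boundedness of partial sums
      set B := Real.exp (t * R1) * (1 / (1 - Real.exp (-s)))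
        + Real.exp t * (1 / (1 - Real.exp (t - s))) with hB
      have htot : ∀ k : ℕ, ∑ w ∈ RW n k, wt (fun i => r i ^ s) w ≤ B :=
        tot_bounded hn r hr0 hr1 ht0 hts hR1ge1 hNle
      -- divergence of partial sums
      set x : Fin n → ℝ := fun i => r i ^ s with hx
      have hx0 : ∀ i, 0 < x i := fun i => Real.rpow_pos_of_pos (hr0 i) s
      set T := Tval x with hTdef
      have hT2 : 0 < 2 * T - 1 := by
        rw [hTdef]; simp only [hx]; linarith [hTs]
      obtain ⟨k, hk⟩ := exists_nat_gt (B / (2 * T - 1))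
      have hdiv : (k : ℝ) * (2 * T - 1) ≤ ∑ a, ys x k a := sum_ys_ge x hx0 hTs k
      have htotk : ∑ w ∈ RW n k, wt x w ≤ B := htot k
      rw [tot_eq] at htotk
      have hBk : B < (k : ℝ) * (2 * T - 1) := by
        rw [div_lt_iff₀ hT2] at hk
        linarith
      linarith
    apply le_of_forall_lt
    intro c hc
    rcases le_or_gt c 0 with h | h
    · calc c ≤ 0 := h
        _ < σ / 2 := by linarith
        _ ≤ limsup f atTop := hlower (σ / 2) (by linarith) (by linarith)
      -- strict via c < σ/2 ≤ limsup handled below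
    · have : (c + σ) / 2 ≤ limsup f atTop := hlower ((c + σ) / 2) (by linarith) (by linarith)
      linarith


/-! ### The critical point -/

lemma gam_bounds {n : ℕ} (p : Fin n → ℝ) (hp : ∀ i, 0 < p i) {τ : ℝ} (hτ : 0 < τ) (i : Fin n) :
    0 < Cogrowth.gam p τ i ∧ Cogrowth.gam p τ i < 1 ∧
      (Cogrowth.gam p τ i) ^ 2 + (τ * (p i)⁻¹) * Cogrowth.gam p τ i = 1 := by
  set x := τ * (p i)⁻¹ with hx
  have hx0 : 0 < x := mul_pos hτ (inv_pos.mpr (hp i))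
  have hxx : τ ^ 2 * ((p i)⁻¹) ^ 2 = x ^ 2 := by rw [hx]; ring
  set u := Cogrowth.gam p τ i with hu
  have h2u : 2 * u = Real.sqrt (x ^ 2 + 4) - x := by
    rw [hu]; unfold Cogrowth.gam; rw [hxx]; ring
  have hsq : Real.sqrt (x ^ 2 + 4) ^ 2 = x ^ 2 + 4 := Real.sq_sqrt (by positivity)
  have hgt : x < Real.sqrt (x ^ 2 + 4) := (Real.lt_sqrt hx0.le).mpr (by linarith)
  have hlt : Real.sqrt (x ^ 2 + 4) < x + 2 := (Real.sqrt_lt' (by linarith)).mpr (by nlinarith)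
  exact ⟨by nlinarith, by nlinarith, by nlinarith⟩

lemma crit_sum {n : ℕ} (hn : 2 ≤ n) (p : Fin n → ℝ) (hp : ∀ i, 0 < p i)
    {τ0 : ℝ} (hτ0 : 0 < τ0)
    (hmax : ∀ τ : ℝ, 0 < τ → τ ≠ τ0 →
      1 - (∑ i, Real.sqrt (τ ^ 2 + 4 * p i ^ 2)) + (n - 1) * τ <
        1 - (∑ i, Real.sqrt (τ0 ^ 2 + 4 * p i ^ 2)) + (n - 1) * τ0) :
    ∑ i, (Cogrowth.gam p τ0 i) ^ 2 / (1 + (Cogrowth.gam p τ0 i) ^ 2) = 1 / 2 := by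
  set φ : ℝ → ℝ := fun τ => 1 - (∑ i, Real.sqrt (τ ^ 2 + 4 * p i ^ 2)) + (n - 1) * τ with hφdef
  have hvpos : ∀ (τ : ℝ) (i : Fin n), 0 < τ ^ 2 + 4 * p i ^ 2 := by
    intro τ i
    have := hp i
    positivity
  have hD : ∀ i : Fin n, HasDerivAt (fun τ : ℝ => Real.sqrt (τ ^ 2 + 4 * p i ^ 2))
      (τ0 / Real.sqrt (τ0 ^ 2 + 4 * p i ^ 2)) τ0 := by
    intro i
    have hinner : HasDerivAt (fun τ : ℝ => τ ^ 2 + 4 * p i ^ 2) (2 * τ0) τ0 := by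
      have := (hasDerivAt_pow 2 τ0).add_const (4 * p i ^ 2)
      simpa using this
    have hne : τ0 ^ 2 + 4 * p i ^ 2 ≠ 0 := (hvpos τ0 i).ne'
    have hsqrtpos : 0 < Real.sqrt (τ0 ^ 2 + 4 * p i ^ 2) := Real.sqrt_pos.mpr (hvpos τ0 i)
    have hcomp := (Real.hasDerivAt_sqrt hne).comp τ0 hinner
    refine hcomp.congr_deriv ?_
    field_simp
  have hsum : HasDerivAt (fun τ : ℝ => ∑ i, Real.sqrt (τ ^ 2 + 4 * p i ^ 2))
      (∑ i, τ0 / Real.sqrt (τ0 ^ 2 + 4 * p i ^ 2)) τ0 :=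
    HasDerivAt.fun_sum fun i _ => hD i
  have hφ : HasDerivAt φ (-(∑ i, τ0 / Real.sqrt (τ0 ^ 2 + 4 * p i ^ 2)) + ((n : ℝ) - 1)) τ0 := by
    have h1 := hsum.const_sub 1
    have h2 : HasDerivAt (fun τ : ℝ => ((n : ℝ) - 1) * τ) ((n : ℝ) - 1) τ0 := by
      simpa using (hasDerivAt_id τ0).const_mul ((n : ℝ) - 1)
    exact h1.add h2
  have hloc : IsLocalMax φ τ0 := by
    filter_upwards [Metric.ball_mem_nhds τ0 hτ0] with τ hball
    rw [Metric.mem_ball, Real.dist_eq] at hball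
    have hτpos : 0 < τ := by
      rcases abs_lt.mp hball with ⟨h1, -⟩
      linarith
    rcases eq_or_ne τ τ0 with rfl | hne
    · exact le_refl _
    · exact (hmax τ hτpos hne).le
  have hderiv0 : -(∑ i, τ0 / Real.sqrt (τ0 ^ 2 + 4 * p i ^ 2)) + ((n : ℝ) - 1) = 0 := by
    rw [← hφ.deriv]
    exact hloc.deriv_eq_zero
  have hsum_eq : ∑ i, τ0 / Real.sqrt (τ0 ^ 2 + 4 * p i ^ 2) = (n : ℝ) - 1 := by linarith
  -- translate each term
  have hterm : ∀ i : Fin n, τ0 / Real.sqrt (τ0 ^ 2 + 4 * p i ^ 2)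
      = 1 - 2 * ((Cogrowth.gam p τ0 i) ^ 2 / (1 + (Cogrowth.gam p τ0 i) ^ 2)) := by
    intro i
    obtain ⟨hu0, hu1, hui⟩ := gam_bounds p hp hτ0 i
    set u := Cogrowth.gam p τ0 i with hudef
    set x := τ0 * (p i)⁻¹ with hxdef
    have hpi := hp i
    have hτp : τ0 = p i * x := by rw [hxdef]; field_simp
    have hx0 : 0 < x := mul_pos hτ0 (inv_pos.mpr hpi)
    have h2ux : 0 < 2 * u + x := by linarith
    have hsqrt_eq : Real.sqrt (τ0 ^ 2 + 4 * p i ^ 2) = p i * (2 * u + x) := by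
      rw [show τ0 ^ 2 + 4 * p i ^ 2 = (p i * (2 * u + x)) ^ 2 by
        nlinarith [hui, hτp]]
      exact Real.sqrt_sq (by positivity)
    rw [hsqrt_eq]
    have h1u : (0:ℝ) < 1 + u ^ 2 := by positivity
    rw [div_eq_iff (by positivity : (p i * (2 * u + x)) ≠ 0)]
    field_simp
    linear_combination (1 + u ^ 2) * hτp + (2 * p i * u) * hui
  rw [Finset.sum_congr rfl fun i _ => hterm i] at hsum_eq
  rw [Finset.sum_sub_distrib] at hsum_eq
  simp only [Finset.sum_const, Finset.card_univ, Fintype.card_fin, nsmul_eq_mul, mul_one,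
    ← Finset.mul_sum] at hsum_eq
  linarith


end Cog14

/-- at the maximum point `τ₀` of `λ(γ_{p₀}(τ))` there is a unique
`r₀ ∈ ℛ` with `H(r₀, δ(r₀)/2) = γ_{p₀}(τ₀)`. -/
theorem statement14 (n : ℕ) (hn : 2 ≤ n) (p : Fin n → ℝ) (hp : ∀ i, 0 < p i)
    (hpsum : ∑ i, p i = 1 / 2) (τ0 : ℝ) (hτ0 : 0 < τ0)
    (hmax : ∀ τ : ℝ, 0 < τ → τ ≠ τ0 →
      1 - (∑ i, Real.sqrt (τ ^ 2 + 4 * p i ^ 2)) + (n - 1) * τ <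
        1 - (∑ i, Real.sqrt (τ0 ^ 2 + 4 * p i ^ 2)) + (n - 1) * τ0) :
    ∃! r : Fin n → ℝ, (∀ i, 0 < r i) ∧ (∑ i, r i = 1 / 2) ∧
      Cogrowth.Hmap r (Cogrowth.delta r / 2) = Cogrowth.gam p τ0 := by
  have hn0 : 0 < n := by omega
  have hne : Nonempty (Fin n) := ⟨⟨0, hn0⟩⟩
  set u := Cogrowth.gam p τ0 with hudef
  have hu0 : ∀ i, 0 < u i := fun i => (Cog14.gam_bounds p hp hτ0 i).1
  have hu1 : ∀ i, u i < 1 := fun i => (Cog14.gam_bounds p hp hτ0 i).2.1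
  have hTu : ∑ i, u i ^ 2 / (1 + u i ^ 2) = 1 / 2 := Cog14.crit_sum hn p hp hτ0 hmax
  set F : ℝ → ℝ := fun c => ∑ i, u i ^ c with hFdef
  have hFanti : StrictAnti F := by
    intro a b hab
    apply Finset.sum_lt_sum_of_nonempty Finset.univ_nonempty
    intro i _
    exact Real.rpow_lt_rpow_of_exponent_gt (hu0 i) (hu1 i) hab
  have hFcont : Continuous F := by
    apply continuous_finset_sum
    intro i _
    exact (Real.continuous_exp.comp (continuous_const.mul continuous_id)).congr
      fun c => (Real.rpow_def_of_pos (hu0 i) c).symm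
  have hrpow2 : ∀ i, u i ^ (2:ℝ) = u i ^ 2 := by
    intro i
    rw [show ((2:ℝ)) = ((2:ℕ):ℝ) by norm_num, Real.rpow_natCast]
  have hF2 : 1 / 2 < F 2 := by
    rw [hFdef]
    simp only [hrpow2]
    rw [← hTu]
    apply Finset.sum_lt_sum_of_nonempty Finset.univ_nonempty
    intro i _
    have h1 : (0:ℝ) < u i ^ 2 := pow_pos (hu0 i) 2
    exact div_lt_self h1 (by nlinarith [hu0 i])
  have htend : Filter.Tendsto F Filter.atTop (nhds 0) := by
    have : Filter.Tendsto (fun c : ℝ => ∑ i, u i ^ c) Filter.atTop (nhds (∑ _i : Fin n, 0)) := by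
      apply tendsto_finset_sum
      intro i _
      exact tendsto_rpow_atTop_of_base_lt_one (u i) (by linarith [hu0 i]) (hu1 i)
    simpa using this
  obtain ⟨c2, hc2⟩ := ((htend.eventually_lt_const (by norm_num : (0:ℝ) < 1/2)).and
    (Filter.eventually_ge_atTop (2:ℝ))).exists
  obtain ⟨hFc2, hc2ge⟩ := hc2
  have hIVT : (1:ℝ)/2 ∈ F '' Set.Icc 2 c2 := by
    apply intermediate_value_Icc' hc2ge hFcont.continuousOn
    exact ⟨hFc2.le, hF2.le⟩
  obtain ⟨c, hcmem, hFc⟩ := hIVT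
  have hc0 : (0:ℝ) < c := lt_of_lt_of_le two_pos hcmem.1
  set r0 : Fin n → ℝ := fun i => u i ^ c with hr0def
  have hr0pos : ∀ i, 0 < r0 i := fun i => Real.rpow_pos_of_pos (hu0 i) c
  have hr0lt1 : ∀ i, r0 i < 1 := fun i => Real.rpow_lt_one (hu0 i).le (hu1 i) hc0
  have hr0sum : ∑ i, r0 i = 1 / 2 := hFc
  have hrs : ∀ i, r0 i ^ ((2:ℝ)/c) = u i ^ 2 := by
    intro i
    rw [hr0def]
    rw [← Real.rpow_mul (hu0 i).le, show c * ((2:ℝ)/c) = (2:ℝ) by field_simp]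
    exact hrpow2 i
  have hTr : Cog14.Tval (fun i => r0 i ^ ((2:ℝ)/c)) = 1 / 2 := by
    unfold Cog14.Tval
    simp only [hrs]
    exact hTu
  have hσ : (0:ℝ) < 2/c := by positivity
  have hdelta : Cogrowth.delta r0 = 2/c := Cog14.delta_eq hn0 r0 hr0pos hr0lt1 hσ hTr
  have hH : Cogrowth.Hmap r0 (Cogrowth.delta r0 / 2) = u := by
    funext i
    show r0 i ^ (Cogrowth.delta r0 / 2) = u i
    rw [hdelta, show (2/c)/2 = 1/c by ring, hr0def]
    rw [← Real.rpow_mul (hu0 i).le, show c * ((1:ℝ)/c) = (1:ℝ) by field_simp, Real.rpow_one]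
  refine ⟨r0, ⟨hr0pos, hr0sum, hH⟩, ?_⟩
  rintro r' ⟨h1, h2, h3⟩
  have hr'lt1 : ∀ i, r' i < 1 := by
    intro i
    have : r' i ≤ ∑ j, r' j :=
      Finset.single_le_sum (fun j _ => (h1 j).le) (Finset.mem_univ i)
    rw [h2] at this
    linarith
  set d := Cogrowth.delta r' / 2 with hddef
  have hu_eq : ∀ i, r' i ^ d = u i := fun i => congrFun h3 i
  have hd0 : 0 < d := by
    by_contra hcon
    push_neg at hcon
    have i0 : Fin n := ⟨0, hn0⟩
    have := Real.one_le_rpow_of_pos_of_le_one_of_nonpos (h1 i0) (hr'lt1 i0).le hcon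
    rw [hu_eq i0] at this
    linarith [hu1 i0]
  have hr'_eq : ∀ i, r' i = u i ^ ((1:ℝ)/d) := by
    intro i
    rw [← hu_eq i, ← Real.rpow_mul (h1 i).le, show d * ((1:ℝ)/d) = 1 by field_simp,
      Real.rpow_one]
  have hsum' : F (1/d) = 1/2 := by
    rw [hFdef]
    simp only
    rw [← h2]
    exact Finset.sum_congr rfl fun i _ => (hr'_eq i).symm
  have hceq : (1:ℝ)/d = c := hFanti.injective (hsum'.trans hFc.symm)
  funext i
  rw [hr'_eq i, hceq, hr0def]
end
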